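/- arXiv:2005.11942 — 4 statements merged into one kernel-verified Lean document; each statement's English description precedes it below -/
import Mathlib

section
/- For all d, γ ∈ (0,1] there exist ρ, β > 0 and n₀ such that in every (ρ, d, vvv)-dense 3-uniform hypergraph H on n ≥ n₀ vertices there exists a collection of at most 1/β pairwise vertex-disjoint β-connectable tight paths that together cover all but at most γ²·n vertices of H. -/
open Finset

/- `E` is the edge set of a 3-uniform hypergraph: every edge is a 3-element vertex set. -/
def ThreeUniform {V : Type*} (E : Finset (Finset V)) : Prop :=
  ∀ e ∈ E, e.card = 3

variable {n : ℕ}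

/- Number of pairs `(x,(y,z)) ∈ X × P` with `{x,y,z} ∈ E`. -/
open Classical in
noncomputable def eXP (E : Finset (Finset (Fin n))) (X : Finset (Fin n))
    (P : Finset (Fin n × Fin n)) : ℕ :=
  ((X ×ˢ P).filter (fun q => ({q.1, q.2.1, q.2.2} : Finset (Fin n)) ∈ E)).card

/- `H = (Fin n, E)` is `(ρ, d, ev)`-dense. -/
def EvDense (E : Finset (Finset (Fin n))) (ρ d : ℝ) : Prop :=
  ∀ (X : Finset (Fin n)) (P : Finset (Fin n × Fin n)),
    d * X.card * P.card - ρ * (n : ℝ) ^ 3 ≤ (eXP E X P : ℝ)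

/- `H = (Fin n, E)` is `(ρ, d, ev)`-dense over `(X, P)`. -/
def EvDenseOver (E : Finset (Finset (Fin n))) (ρ d : ℝ) (X : Finset (Fin n))
    (P : Finset (Fin n × Fin n)) : Prop :=
  ∀ X' ⊆ X, ∀ P' ⊆ P,
    d * X'.card * P'.card - ρ * X.card * P.card ≤ (eXP E X' P' : ℝ)

/- The set `K(P,Q)` of pairs of ordered pairs overlapping in the middle coordinate. -/
open Classical in
noncomputable def Kmid (P Q : Finset (Fin n × Fin n)) :
    Finset ((Fin n × Fin n) × Fin n × Fin n) :=
  (P ×ˢ Q).filter (fun pq => pq.1.2 = pq.2.1)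

/- Number of pairs `((x,y),(y,z)) ∈ P × Q` with `{x,y,z} ∈ E`. -/
open Classical in
noncomputable def ePQ (E : Finset (Finset (Fin n))) (P Q : Finset (Fin n × Fin n)) : ℕ :=
  ((P ×ˢ Q).filter (fun pq =>
    pq.1.2 = pq.2.1 ∧ ({pq.1.1, pq.1.2, pq.2.2} : Finset (Fin n)) ∈ E)).card

/- `H = (Fin n, E)` is `(ρ, d, ee)`-dense. -/
def EeDense (E : Finset (Finset (Fin n))) (ρ d : ℝ) : Prop :=
  ∀ P Q : Finset (Fin n × Fin n),
    d * ((Kmid P Q).card : ℝ) - ρ * (n : ℝ) ^ 3 ≤ (ePQ E P Q : ℝ)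

/- Number of triples `(x,y,z) ∈ X × Y × Z` with `{x,y,z} ∈ E`. -/
open Classical in
noncomputable def eXYZ (E : Finset (Finset (Fin n))) (X Y Z : Finset (Fin n)) : ℕ :=
  ((X ×ˢ Y ×ˢ Z).filter (fun t => ({t.1, t.2.1, t.2.2} : Finset (Fin n)) ∈ E)).card

/- `H = (Fin n, E)` is `(ρ, d, vvv)`-dense. -/
def VvvDense (E : Finset (Finset (Fin n))) (ρ d : ℝ) : Prop :=
  ∀ X Y Z : Finset (Fin n),
    d * X.card * Y.card * Z.card - ρ * (n : ℝ) ^ 3 ≤ (eXYZ E X Y Z : ℝ)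

/- The (vertex) degree of `v`: the number of edges containing `v`, i.e. the number of
pairs `{y,z}` with `{v,y,z} ∈ E`. -/
noncomputable def hdeg (E : Finset (Finset (Fin n))) (v : Fin n) : ℕ :=
  (E.filter (fun e => v ∈ e)).card

/- The codegree of `u` and `v`: the number of vertices `w` with `{u,v,w} ∈ E`. -/
open Classical in
noncomputable def codeg (E : Finset (Finset (Fin n))) (u v : Fin n) : ℕ :=
  (univ.filter (fun w => ({u, v, w} : Finset (Fin n)) ∈ E)).card

/- A tight Hamilton cycle: a cyclic ordering of all vertices in which every three
cyclically consecutive vertices form an edge. -/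
def HasTightHamiltonCycle (E : Finset (Finset (Fin n))) : Prop :=
  ∃ f : ZMod n → Fin n, Function.Bijective f ∧
    ∀ i : ZMod n, ({f i, f (i + 1), f (i + 2)} : Finset (Fin n)) ∈ E

/- The list `l` of vertices is a tight path: its entries are distinct and every three
consecutive entries form an edge. -/
def TightPath (E : Finset (Finset (Fin n))) (l : List (Fin n)) : Prop :=
  l.Nodup ∧ ∀ (i : ℕ) (h : i + 2 < l.length),
    ({l[i]'(by omega), l[i+1]'(by omega), l[i+2]'h} : Finset (Fin n)) ∈ E

/- The set `Z_{xy}` of vertices `z` with `xyz ∈ E` and `d(y,z) ≥ β n`. -/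
open Classical in
noncomputable def connSet (E : Finset (Finset (Fin n))) (β : ℝ) (x y : Fin n) :
    Finset (Fin n) :=
  univ.filter (fun z => ({x, y, z} : Finset (Fin n)) ∈ E ∧ β * n ≤ (codeg E y z : ℝ))

/- The ordered pair `(x,y)` is `β`-connectable. -/
def Connectable (E : Finset (Finset (Fin n))) (β : ℝ) (x y : Fin n) : Prop :=
  β * n ≤ ((connSet E β x y).card : ℝ)

/- A tight `(a,b)`-`(c,d)`-path is `β`-connectable if `(b,a)` and `(c,d)` are
`β`-connectable. -/
def ConnectablePath (E : Finset (Finset (Fin n))) (β : ℝ) (l : List (Fin n)) : Prop :=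
  ∃ h : 2 ≤ l.length,
    Connectable E β (l[1]'(by omega)) (l[0]'(by omega)) ∧
    Connectable E β (l[l.length - 2]'(by omega)) (l[l.length - 1]'(by omega))

/- The number of tight `(x,y)`-`(z,w)`-paths with `ℓ` inner vertices. -/
open Classical in
noncomputable def connCount (E : Finset (Finset (Fin n))) (x y z w : Fin n) (ℓ : ℕ) : ℕ :=
  (univ.filter (fun t : Fin ℓ → Fin n =>
    TightPath E ([x, y] ++ List.ofFn t ++ [z, w]))).card
-- extra defs
/- A bipartite graph between `V₁` and `V₂` (inside an ambient graph `G`) is `(η,d)`-regular. -/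
open Classical in
def RegularPair (G : SimpleGraph (Fin n)) (V₁ V₂ : Finset (Fin n)) (η d : ℝ) : Prop :=
  ∀ X ⊆ V₁, ∀ Y ⊆ V₂,
    |(((X ×ˢ Y).filter (fun p => G.Adj p.1 p.2)).card : ℝ) - d * X.card * Y.card|
      ≤ η * V₁.card * V₂.card

/- A graph is `(ρ,d)`-dense. -/
open Classical in
def GraphDense (G : SimpleGraph (Fin n)) (ρ d : ℝ) : Prop :=
  ∀ X Y : Finset (Fin n),
    d * X.card * Y.card - ρ * (n : ℝ) ^ 2 ≤
      (((X ×ˢ Y).filter (fun p => G.Adj p.1 p.2)).card : ℝ)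

/- The bipartite graph with (ordered) edge set `P ⊆ V₁ × V₂` is `(η,ξ)`-regular. -/
open Classical in
def RegBip {N : ℕ} (P : Finset (Fin N × Fin N)) (V₁ V₂ : Finset (Fin N)) (η ξ : ℝ) : Prop :=
  ∀ X ⊆ V₁, ∀ Y ⊆ V₂,
    |((P.filter (fun p => p.1 ∈ X ∧ p.2 ∈ Y)).card : ℝ) - ξ * X.card * Y.card|
      ≤ η * V₁.card * V₂.card

/- The shadow `∂H[A,B]`: ordered pairs `(a,b) ∈ A × B` contained in a common edge. -/
open Classical in
noncomputable def shadowPairs (E : Finset (Finset (Fin n))) (A B : Finset (Fin n)) :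
    Finset (Fin n × Fin n) :=
  (A ×ˢ B).filter (fun p => ∃ e ∈ E, p.1 ∈ e ∧ p.2 ∈ e)

/- The restricted neighbourhood `N(v,P)`. -/
open Classical in
noncomputable def Nres (E : Finset (Finset (Fin n))) (v : Fin n)
    (P : Finset (Fin n × Fin n)) : Finset (Fin n × Fin n) :=
  P.filter (fun p => ({v, p.1, p.2} : Finset (Fin n)) ∈ E)

/- The number of `(P,Q)`-cherries, counted as ordered tuples `(x,y,z,w)` with
`{x,y} ∈ P`, `{z,w} ∈ Q` disjoint and `xyz, yzw ∈ E`. -/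
open Classical in
noncomputable def cherryCount (E : Finset (Finset (Fin n)))
    (P Q : Finset (Finset (Fin n))) : ℕ :=
  (univ.filter (fun t : Fin n × Fin n × Fin n × Fin n =>
    ({t.1, t.2.1} : Finset (Fin n)) ∈ P ∧
    ({t.2.2.1, t.2.2.2} : Finset (Fin n)) ∈ Q ∧
    Disjoint ({t.1, t.2.1} : Finset (Fin n)) ({t.2.2.1, t.2.2.2} : Finset (Fin n)) ∧
    ({t.1, t.2.1, t.2.2.1} : Finset (Fin n)) ∈ E ∧
    ({t.2.1, t.2.2.1, t.2.2.2} : Finset (Fin n)) ∈ E)).card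

/- The number of tight paths on `ℓ+2` vertices starting with an ordered pair from `P`
and whose last two vertices form a pair from `Q`. -/
open Classical in
noncomputable def pathCountPQ (E : Finset (Finset (Fin n))) (P : Finset (Fin n × Fin n))
    (Q : Finset (Finset (Fin n))) (ℓ : ℕ) : ℕ :=
  (univ.filter (fun t : Fin (ℓ + 2) → Fin n =>
    TightPath E (List.ofFn t) ∧ (t 0, t 1) ∈ P ∧
    ({t ⟨ℓ, by omega⟩, t ⟨ℓ + 1, by omega⟩} : Finset (Fin n)) ∈ Q)).card

/- Two disjoint unordered pairs `q`, `q'` are `(θ,L)`-turnable. -/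
def Turnable (E : Finset (Finset (Fin n))) (θ : ℝ) (L : ℕ) (q q' : Finset (Fin n)) : Prop :=
  Disjoint q q' ∧ ∀ q₁ q₂ q₁' q₂' : Fin n, q = {q₁, q₂} → q' = {q₁', q₂'} →
    ∃ ℓ : ℕ, 1 ≤ ℓ ∧ ℓ ≤ L ∧ θ * (n : ℝ) ^ ℓ ≤ (connCount E q₁ q₂ q₁' q₂' ℓ : ℝ)

/- `t` is an absorber for the triple `(v₁,v₂,v₃)`; here
`(x₁,x₂,x₃,y₁,y₂,y₃,z₁,z₂,z₃) = (t 0,…,t 8)` and `Pᵢ = (aᵢ,bᵢ,cᵢ,dᵢ)` are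
`(t 9,…,t 12)`, `(t 13,…,t 16)`, `(t 17,…,t 20)`. -/
def IsAbsorber (E : Finset (Finset (Fin n))) (v₁ v₂ v₃ : Fin n) (t : Fin 21 → Fin n) : Prop :=
  Function.Injective t ∧ (∀ i : Fin 21, t i ≠ v₁ ∧ t i ≠ v₂ ∧ t i ≠ v₃) ∧
  TightPath E [t 0, t 1, t 2, t 3, t 4, t 5, t 6, t 7, t 8] ∧
  TightPath E [t 0, t 1, t 2, t 6, t 7, t 8] ∧
  TightPath E [t 9, t 10, v₁, t 11, t 12] ∧ TightPath E [t 9, t 10, t 3, t 11, t 12] ∧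
  TightPath E [t 13, t 14, v₂, t 15, t 16] ∧ TightPath E [t 13, t 14, t 4, t 15, t 16] ∧
  TightPath E [t 17, t 18, v₃, t 19, t 20] ∧ TightPath E [t 17, t 18, t 5, t 19, t 20]

open Classical in
noncomputable def absorberCount (E : Finset (Finset (Fin n))) (v₁ v₂ v₃ : Fin n) : ℕ :=
  (univ.filter (fun t : Fin 21 → Fin n => IsAbsorber E v₁ v₂ v₃ t)).card

/- `ψ` is a copy of `C₈(4)`, the 4-blow-up of the tight cycle on 8 vertices. -/
def IsC84Copy (E : Finset (Finset (Fin n))) (ψ : Fin 8 × Fin 4 → Fin n) : Prop :=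
  Function.Injective ψ ∧ ∀ (i : Fin 8) (a b c : Fin 4),
    ({ψ (i, a), ψ (i + 1, b), ψ (i + 2, c)} : Finset (Fin n)) ∈ E

open Classical in
noncomputable def c84Count (E : Finset (Finset (Fin n))) : ℕ :=
  (univ.filter (fun ψ : Fin 8 × Fin 4 → Fin n => IsC84Copy E ψ)).card

/- Number of copies of `F` in `H`: injective maps sending edges to edges. -/
open Classical in
noncomputable def copyCount {k m : ℕ} (F : Finset (Finset (Fin k)))
    (H : Finset (Finset (Fin m))) : ℕ :=
  (univ.filter (fun ψ : Fin k → Fin m =>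
    Function.Injective ψ ∧ ∀ e ∈ F, e.image ψ ∈ H)).card

/- Number of copies of `K₄⁽³⁾⁻`, counted as ordered 4-tuples `(a,x,y,z)` of distinct
vertices with apex `a`. -/
open Classical in
noncomputable def k4mCount (E : Finset (Finset (Fin n))) : ℕ :=
  (univ.filter (fun t : Fin n × Fin n × Fin n × Fin n =>
    ([t.1, t.2.1, t.2.2.1, t.2.2.2] : List (Fin n)).Nodup ∧
    ({t.1, t.2.1, t.2.2.1} : Finset (Fin n)) ∈ E ∧
    ({t.1, t.2.1, t.2.2.2} : Finset (Fin n)) ∈ E ∧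
    ({t.1, t.2.2.1, t.2.2.2} : Finset (Fin n)) ∈ E)).card

/- Number of 5-tuples of distinct vertices `(p₁,p₂,x,p₁',p₂')` with `(p₁,p₂) ∈ P`,
`(p₁',p₂') ∈ P'` and `p₁p₂x`, `p₂xp₁'`, `xp₁'p₂'` edges. -/
open Classical in
noncomputable def midConnCount (E : Finset (Finset (Fin n)))
    (P P' : Finset (Fin n × Fin n)) : ℕ :=
  (univ.filter (fun t : Fin n × Fin n × Fin n × Fin n × Fin n =>
    ([t.1, t.2.1, t.2.2.1, t.2.2.2.1, t.2.2.2.2] : List (Fin n)).Nodup ∧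
    (t.1, t.2.1) ∈ P ∧ (t.2.2.2.1, t.2.2.2.2) ∈ P' ∧
    ({t.1, t.2.1, t.2.2.1} : Finset (Fin n)) ∈ E ∧
    ({t.2.1, t.2.2.1, t.2.2.2.1} : Finset (Fin n)) ∈ E ∧
    ({t.2.2.1, t.2.2.2.1, t.2.2.2.2} : Finset (Fin n)) ∈ E)).card

-- ===================== auxiliary development for statement_2 =====================

section AlmostCoverAux

variable {n : ℕ}

/-- codegree within a sub-collection of edges. -/
private noncomputable def codegF (F : Finset (Finset (Fin n))) (a b : Fin n) : ℕ :=
  (F.filter (fun e => a ∈ e ∧ b ∈ e)).card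

/-- every pair inside an edge of `F` has codegree at least `t` in `F`. -/
private def GoodF (F : Finset (Finset (Fin n))) (t : ℕ) : Prop :=
  ∀ e ∈ F, ∀ a b : Fin n, a ≠ b → a ∈ e → b ∈ e → t ≤ codegF F a b

open Classical in
private noncomputable def Zset (G : Finset (Finset (Fin n))) (a b : Fin n) : Finset (Fin n) :=
  univ.filter (fun w => ({a, b, w} : Finset (Fin n)) ∈ G)

private lemma mem_Zset {G : Finset (Finset (Fin n))} {a b w : Fin n} :
    w ∈ Zset G a b ↔ ({a, b, w} : Finset (Fin n)) ∈ G := by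
  classical
  simp [Zset]

private lemma codeg_eq_Zset (G : Finset (Finset (Fin n))) (a b : Fin n) :
    codeg G a b = (Zset G a b).card := rfl

private lemma third_vertex {e : Finset (Fin n)} (he : e.card = 3) {a b : Fin n}
    (hab : a ≠ b) (ha : a ∈ e) (hb : b ∈ e) :
    ∃ c, c ≠ a ∧ c ≠ b ∧ e = {a, b, c} := by
  have hcard : ((e.erase a).erase b).card = 1 := by
    rw [Finset.card_erase_of_mem (Finset.mem_erase.2 ⟨hab.symm, hb⟩),
      Finset.card_erase_of_mem ha, he]
  obtain ⟨c, hc⟩ := Finset.card_pos.1 (by omega : 0 < ((e.erase a).erase b).card)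
  have hcb : c ≠ b := (Finset.mem_erase.1 hc).1
  have hca : c ≠ a := (Finset.mem_erase.1 (Finset.mem_erase.1 hc).2).1
  have hce : c ∈ e := Finset.mem_of_mem_erase (Finset.mem_of_mem_erase hc)
  refine ⟨c, hca, hcb, ?_⟩
  have hbc : b ∉ ({c} : Finset (Fin n)) := by simp [hcb.symm]
  have habc : a ∉ ({b, c} : Finset (Fin n)) := by simp [hab, hca.symm]
  have hc3 : ({a, b, c} : Finset (Fin n)).card = 3 := by
    rw [Finset.card_insert_of_notMem habc, Finset.card_insert_of_notMem hbc,
      Finset.card_singleton]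
  have hsub : ({a, b, c} : Finset (Fin n)) ⊆ e := by
    intro x hx
    simp only [Finset.mem_insert, Finset.mem_singleton] at hx
    rcases hx with rfl | rfl | rfl <;> assumption
  exact (Finset.eq_of_subset_of_card_le hsub (by omega)).symm

private lemma pair_card_le (x y : Fin n) : ({x, y} : Finset (Fin n)).card ≤ 2 := by
  have h := Finset.card_insert_le x ({y} : Finset (Fin n))
  simpa using h

private lemma card3_ne {a b w : Fin n} (h : ({a, b, w} : Finset (Fin n)).card = 3) :
    a ≠ b ∧ w ≠ a ∧ w ≠ b := by
  refine ⟨fun hE => ?_, fun hE => ?_, fun hE => ?_⟩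
  · rw [hE, Finset.insert_idem] at h
    have h2 := pair_card_le b w; omega
  · rw [hE, Finset.pair_comm b a, Finset.insert_idem] at h
    have h2 := pair_card_le a b; omega
  · rw [hE, Finset.insert_eq_self.2 (Finset.mem_singleton_self b)] at h
    have h2 := pair_card_le a b; omega

private lemma codegF_le_Zset {F G : Finset (Finset (Fin n))} (hFG : F ⊆ G)
    (h3 : ∀ e ∈ F, e.card = 3) {a b : Fin n} (hab : a ≠ b) :
    codegF F a b ≤ (Zset G a b).card := by
  classical
  have hsub : F.filter (fun e => a ∈ e ∧ b ∈ e) ⊆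
      (Zset G a b).image (fun w => ({a, b, w} : Finset (Fin n))) := by
    intro e he
    rw [Finset.mem_filter] at he
    obtain ⟨heF, hae, hbe⟩ := he
    obtain ⟨c, _, _, hce⟩ := third_vertex (h3 e heF) hab hae hbe
    refine Finset.mem_image.2 ⟨c, mem_Zset.2 ?_, hce.symm⟩
    rw [← hce]; exact hFG heF
  calc codegF F a b ≤ _ := Finset.card_le_card hsub
    _ ≤ _ := Finset.card_image_le

private lemma codegF_le_codeg {F G : Finset (Finset (Fin n))} (hFG : F ⊆ G)
    (h3 : ∀ e ∈ F, e.card = 3) {a b : Fin n} (hab : a ≠ b) :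
    codegF F a b ≤ codeg G a b := by
  rw [codeg_eq_Zset]; exact codegF_le_Zset hFG h3 hab

open Classical in
private noncomputable def pairSet (F : Finset (Finset (Fin n))) : Finset (Fin n × Fin n) :=
  (univ ×ˢ univ).filter (fun p => p.1 ≠ p.2 ∧ ∃ e ∈ F, p.1 ∈ e ∧ p.2 ∈ e)

private lemma pairSet_card_le (F : Finset (Finset (Fin n))) :
    (pairSet F).card ≤ n * n := by
  classical
  calc (pairSet F).card ≤ (univ ×ˢ univ : Finset (Fin n × Fin n)).card :=
        Finset.card_filter_le _ _
    _ = n * n := by simp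

/-- cleaning: pass to a subfamily where every pair in an edge has codegree ≥ t. -/
private lemma clean (t : ℕ) (F : Finset (Finset (Fin n))) :
    ∃ F', F' ⊆ F ∧ GoodF F' t ∧
      F.card + t * (pairSet F').card ≤ F'.card + t * (pairSet F).card := by
  classical
  induction F using Finset.strongInduction with
  | _ F ih =>
    by_cases hg : GoodF F t
    · exact ⟨F, Finset.Subset.refl F, hg, le_rfl⟩
    · unfold GoodF at hg
      push_neg at hg
      obtain ⟨e₀, he₀, a, b, hab, ha, hb, hcd⟩ := hg
      set F₁ := F.filter (fun e => ¬(a ∈ e ∧ b ∈ e)) with hF₁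
      have hss : F₁ ⊂ F := by
        refine Finset.filter_ssubset.2 ⟨e₀, he₀, ?_⟩
        simp [ha, hb]
      obtain ⟨F', hF'sub, hgood, hineq⟩ := ih F₁ hss
      have hcards : codegF F a b + F₁.card = F.card :=
        Finset.card_filter_add_card_filter_not _
      have hPsub : pairSet F₁ ⊂ pairSet F := by
        constructor
        · intro p hp
          simp only [pairSet, Finset.mem_filter] at hp ⊢
          obtain ⟨hp1, hp2, e, heF, hpe⟩ := hp
          exact ⟨hp1, hp2, e, (Finset.filter_subset _ _) heF, hpe⟩
        · intro hcon
          have hmem : (a, b) ∈ pairSet F := by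
            simp only [pairSet, Finset.mem_filter]
            exact ⟨by simp, hab, e₀, he₀, ha, hb⟩
          have := hcon hmem
          simp only [pairSet, Finset.mem_filter] at this
          obtain ⟨_, _, e, heF₁, hae, hbe⟩ := this
          rw [hF₁, Finset.mem_filter] at heF₁
          exact heF₁.2 ⟨hae, hbe⟩
      have hP : (pairSet F₁).card + 1 ≤ (pairSet F).card := Finset.card_lt_card hPsub
      have h4 : t * (pairSet F₁).card + t ≤ t * (pairSet F).card := by
        calc t * (pairSet F₁).card + t = t * ((pairSet F₁).card + 1) := by ring
          _ ≤ t * (pairSet F).card := Nat.mul_le_mul_left t hP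
      refine ⟨F', hF'sub.trans (Finset.filter_subset _ _), hgood, ?_⟩
      have hcdle : codegF F a b ≤ t := le_of_lt hcd
      linarith [hineq, h4, hcards, hcdle]

set_option maxHeartbeats 1000000 in
private lemma greedy {F : Finset (Finset (Fin n))} {t : ℕ}
    (h3 : ∀ e ∈ F, e.card = 3) (hgood : GoodF F t) (hne : F.Nonempty) :
    ∀ L, 3 ≤ L → L ≤ t →
      ∃ l : List (Fin n), l.length = L ∧ l.Nodup ∧
        ∀ (i : ℕ) (h : i + 2 < l.length),
          ({l[i]'(by omega), l[i+1]'(by omega), l[i+2]'h} : Finset (Fin n)) ∈ F := by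
  intro L hL3
  induction L, hL3 using Nat.le_induction with
  | base =>
    intro _
    obtain ⟨e, he⟩ := hne
    obtain ⟨x, y, z, hxy, hxz, hyz, rfl⟩ := Finset.card_eq_three.1 (h3 e he)
    refine ⟨[x, y, z], rfl, by simp [hxy, hxz, hyz], ?_⟩
    intro i h
    simp only [List.length_cons, List.length_nil] at h
    have hi : i = 0 := by omega
    subst hi
    simpa using he
  | succ L hL ih =>
    intro hLt
    obtain ⟨l, hlen, hnd, htr⟩ := ih (by omega)
    obtain ⟨j, hj⟩ : ∃ j, L = j + 3 := ⟨L - 3, by omega⟩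
    subst hj
    have hj2 : j + 2 < l.length := by omega
    have hlast := htr j hj2
    have hne' : l[j+1]'(by omega) ≠ l[j+2]'(by omega) := by
      intro hEq
      have := (List.Nodup.getElem_inj_iff hnd).1 hEq
      omega
    have hcod : t ≤ codegF F (l[j+1]'(by omega)) (l[j+2]'(by omega)) := by
      refine hgood _ hlast _ _ hne' ?_ ?_ <;> simp
    have hZ : t ≤ (Zset F (l[j+1]'(by omega)) (l[j+2]'(by omega))).card :=
      le_trans hcod (codegF_le_Zset (Finset.Subset.refl F) h3 hne')
    have hnotsub : ¬ (Zset F (l[j+1]'(by omega)) (l[j+2]'(by omega)) ⊆ l.toFinset) := by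
      intro hsub
      have h1 := Finset.card_le_card hsub
      have h2 := List.toFinset_card_le l
      omega
    obtain ⟨z, hzZ, hz2⟩ := Finset.not_subset.1 hnotsub
    have hzl : z ∉ l := fun hc => hz2 (List.mem_toFinset.2 hc)
    have hzF : ({l[j+1]'(by omega), l[j+2]'(by omega), z} : Finset (Fin n)) ∈ F :=
      mem_Zset.1 hzZ
    refine ⟨l ++ [z], by simp [hlen], ?_, ?_⟩
    · rw [List.nodup_append]
      refine ⟨hnd, List.nodup_singleton z, ?_⟩
      intro a ha b hb
      simp only [List.mem_singleton] at hb
      subst hb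
      exact fun h => hzl (h ▸ ha)
    · clear hZ hnotsub hcod hne' ih hgood hne h3 hlast hzZ hz2 hLt
      intro i h
      have hlen' : (l ++ [z]).length = j + 4 := by simp [hlen]
      by_cases hcase : i + 2 < j + 3
      · have g0 : (l ++ [z])[i]'(by omega) = l[i]'(by omega) :=
          List.getElem_append_left (by omega)
        have g1 : (l ++ [z])[i+1]'(by omega) = l[i+1]'(by omega) :=
          List.getElem_append_left (by omega)
        have g2 : (l ++ [z])[i+2]'(by omega) = l[i+2]'(by omega) :=
          List.getElem_append_left (by omega)
        rw [g0, g1, g2]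
        exact htr i (by omega)
      · have hi : i = j + 1 := by omega
        subst hi
        have g0 : (l ++ [z])[j+1]'(by omega) = l[j+1]'(by omega) :=
          List.getElem_append_left (by omega)
        have g1 : (l ++ [z])[j+2]'(by omega) = l[j+2]'(by omega) :=
          List.getElem_append_left (by omega)
        have g2 : (l ++ [z])[j+3]'(by omega) = z := by
          have := List.getElem_append_right (as := l) (bs := [z]) (i := j + 3)
            (h₁ := by omega) (h₂ := by simp [hlen])
          rw [this]
          simp [hlen]
        rw [g0, g1, g2]
        exact hzF

private lemma eXYZ_le_27 {E : Finset (Finset (Fin n))} (hu : ThreeUniform E)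
    (U : Finset (Fin n)) :
    eXYZ E U U U ≤ 27 * (E.filter (fun e => e ⊆ U)).card := by
  classical
  unfold eXYZ
  refine le_trans (Finset.card_le_mul_card_image_of_maps_to
    (f := fun q : Fin n × Fin n × Fin n => ({q.1, q.2.1, q.2.2} : Finset (Fin n)))
    (t := E.filter (fun e => e ⊆ U)) ?_ 27 ?_) (le_rfl)
  · intro q hq
    rw [Finset.mem_filter] at hq ⊢
    obtain ⟨hqmem, hqE⟩ := hq
    rw [Finset.mem_product] at hqmem
    obtain ⟨h1, hq2⟩ := hqmem
    rw [Finset.mem_product] at hq2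
    refine ⟨hqE, ?_⟩
    intro w hw
    simp only [Finset.mem_insert, Finset.mem_singleton] at hw
    rcases hw with rfl | rfl | rfl
    · exact h1
    · exact hq2.1
    · exact hq2.2
  · intro b hb
    rw [Finset.mem_filter] at hb
    have hb3 : b.card = 3 := hu b hb.1
    refine le_trans (Finset.card_le_card (t := b ×ˢ b ×ˢ b) ?_) ?_
    · intro q hq
      rw [Finset.mem_filter] at hq
      have hqb := hq.2
      rw [Finset.mem_product, Finset.mem_product]
      refine ⟨?_, ?_, ?_⟩ <;> rw [← hqb] <;> simp
    · rw [Finset.card_product, Finset.card_product, hb3]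

private lemma extract {E : Finset (Finset (Fin n))} {d γ ρ β : ℝ} (k : ℕ)
    (hu : ThreeUniform E) (hd : VvvDense E ρ d)
    (hdpos : 0 < d) (hγpos : 0 < γ)
    (hkβ : β * n ≤ (k : ℝ))
    (hcrit : (27 : ℝ) * (3 * k + 3) * n * n < (d * γ ^ 6 - ρ) * (n : ℝ) ^ 3)
    {U : Finset (Fin n)} (hU : γ ^ 2 * (n : ℝ) < U.card) :
    ∃ l : List (Fin n), l.length = 2 * k + 3 ∧ TightPath E l ∧
      ConnectablePath E β l ∧ ∀ v ∈ l, v ∈ U := by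
  classical
  set EU := E.filter (fun e => e ⊆ U) with hEUdef
  have h3U : ∀ e ∈ EU, e.card = 3 := fun e he => hu e ((Finset.filter_subset _ _) he)
  have hsubU : ∀ e ∈ EU, e ⊆ U := fun e he => (Finset.mem_filter.1 he).2
  have hXYZ := hd U U U
  have h27 := eXYZ_le_27 hu U
  have hUcast : (0:ℝ) ≤ γ ^ 2 * n := by positivity
  have hU3 : γ ^ 6 * (n:ℝ) ^ 3 ≤ (U.card : ℝ) * U.card * U.card := by
    have h := pow_le_pow_left₀ hUcast (le_of_lt hU) 3
    calc γ ^ 6 * (n:ℝ) ^ 3 = (γ ^ 2 * n) ^ 3 := by ring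
      _ ≤ (U.card : ℝ) ^ 3 := h
      _ = (U.card : ℝ) * U.card * U.card := by ring
  have h1 : (d * γ ^ 6 - ρ) * (n:ℝ) ^ 3 ≤ 27 * EU.card := by
    have h2 : d * (γ ^ 6 * (n:ℝ)^3) ≤ d * ((U.card:ℝ) * U.card * U.card) :=
      mul_le_mul_of_nonneg_left hU3 (le_of_lt hdpos)
    have h3 : (eXYZ E U U U : ℝ) ≤ 27 * EU.card := by exact_mod_cast h27
    nlinarith [hXYZ]
  have hEUcard : ((3 * k + 3) * (n * n) : ℕ) < EU.card := by
    have h4 : (((3 * k + 3) * (n * n) : ℕ) : ℝ) < (EU.card : ℝ) := by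
      push_cast
      nlinarith [hcrit, h1]
    exact_mod_cast h4
  obtain ⟨F', hF'sub, hgood, hclean⟩ := clean (3 * k + 3) EU
  have hPle : (pairSet EU).card ≤ n * n := pairSet_card_le EU
  have hF'card : 0 < F'.card := by
    have h5 : (3*k+3) * (pairSet EU).card ≤ (3*k+3) * (n*n) :=
      Nat.mul_le_mul_left _ hPle
    have h6 := Nat.zero_le ((3*k+3) * (pairSet F').card)
    linarith [hclean, h5, hEUcard, h6]
  have hF'ne : F'.Nonempty := Finset.card_pos.1 hF'card
  have h3F' : ∀ e ∈ F', e.card = 3 := fun e he => h3U e (hF'sub he)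
  obtain ⟨l, hlen, hnd, htr⟩ := greedy h3F' hgood hF'ne (2*k+3) (by omega) (by omega)
  have hF'E : F' ⊆ E := hF'sub.trans (Finset.filter_subset _ _)
  have htight : TightPath E l := ⟨hnd, fun i h => hF'E (htr i h)⟩
  have hkey : ∀ a b : Fin n, a ≠ b → ∀ e ∈ F', a ∈ e → b ∈ e → Connectable E β a b := by
    intro a b hab e he hae hbe
    have hcodF : 3*k+3 ≤ codegF F' a b := hgood e he a b hab hae hbe
    have hZcard : 3*k+3 ≤ (Zset F' a b).card :=
      le_trans hcodF (codegF_le_Zset (Finset.Subset.refl F') h3F' hab)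
    have hsubconn : Zset F' a b ⊆ connSet E β a b := by
      intro w hw
      have hwF : ({a, b, w} : Finset (Fin n)) ∈ F' := mem_Zset.1 hw
      have hcard3 : ({a, b, w} : Finset (Fin n)).card = 3 := h3F' _ hwF
      obtain ⟨-, -, hwb⟩ := card3_ne hcard3
      have hbw : b ≠ w := fun hEq => hwb hEq.symm
      have hcodbw : 3*k+3 ≤ codegF F' b w := by
        refine hgood _ hwF b w hbw (by simp) (by simp)
      have hcodE : (3*k+3 : ℕ) ≤ codeg E b w :=
        le_trans hcodbw (codegF_le_codeg hF'E h3F' hbw)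
      simp only [connSet, Finset.mem_filter, Finset.mem_univ, true_and]
      refine ⟨hF'E hwF, ?_⟩
      have hc : ((3*k+3 : ℕ) : ℝ) ≤ (codeg E b w : ℝ) := Nat.cast_le.2 hcodE
      push_cast at hc
      linarith [hkβ]
    have hcc : ((3*k+3 : ℕ) : ℝ) ≤ ((connSet E β a b).card : ℝ) :=
      Nat.cast_le.2 (le_trans hZcard (Finset.card_le_card hsubconn))
    push_cast at hcc
    unfold Connectable
    linarith [hkβ]
  have hmemU : ∀ v ∈ l, v ∈ U := by
    intro v hv
    obtain ⟨i, hi, rfl⟩ := List.mem_iff_getElem.1 hv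
    by_cases hcase : i + 2 < l.length
    · have he := htr i hcase
      have hm : l[i]'hi ∈ ({l[i]'(by omega), l[i+1]'(by omega), l[i+2]'hcase} : Finset (Fin n)) := by
        simp
      exact hsubU _ (hF'sub he) hm
    · have hlast := htr (2*k) (by omega)
      have hi' : i = 2*k+1 ∨ i = 2*k+2 := by omega
      have hm : l[i]'hi ∈ ({l[2*k]'(by omega), l[2*k+1]'(by omega), l[2*k+2]'(by omega)} : Finset (Fin n)) := by
        rcases hi' with h' | h' <;> subst h' <;> simp
      exact hsubU _ (hF'sub hlast) hm
  refine ⟨l, hlen, htight, ?_, hmemU⟩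
  refine ⟨by omega, ?_, ?_⟩
  · have h0 := htr 0 (by omega)
    refine hkey _ _ ?_ _ h0 (by simp) (by simp)
    intro hEq
    have := (List.Nodup.getElem_inj_iff hnd).1 hEq
    omega
  · have hL2 : l.length - 2 = 2*k+1 := by omega
    have hL1 : l.length - 1 = 2*k+2 := by omega
    simp only [hL2, hL1]
    have hlast := htr (2*k) (by omega)
    refine hkey _ _ ?_ _ hlast (by simp) (by simp)
    intro hEq
    have := (List.Nodup.getElem_inj_iff hnd).1 hEq
    omega

private lemma cover (E : Finset (Finset (Fin n))) (β bound : ℝ) (L : ℕ) (hL : 0 < L)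
    (hext : ∀ U : Finset (Fin n), bound < (U.card : ℝ) →
      ∃ l : List (Fin n), l.length = L ∧ TightPath E l ∧ ConnectablePath E β l ∧
        ∀ v ∈ l, v ∈ U) :
    ∀ U : Finset (Fin n), ∃ Ps : Finset (List (Fin n)),
      (∀ l ∈ Ps, TightPath E l ∧ ConnectablePath E β l) ∧
      (∀ l ∈ Ps, ∀ l' ∈ Ps, l ≠ l' → ∀ v : Fin n, v ∈ l → v ∉ l') ∧
      (∀ l ∈ Ps, ∀ v ∈ l, v ∈ U) ∧
      Ps.card * L ≤ U.card ∧
      ((U.filter (fun v => ∀ l ∈ Ps, v ∉ l)).card : ℝ) ≤ bound := by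
  classical
  intro U
  induction U using Finset.strongInduction with
  | _ U ih =>
    by_cases hbig : bound < (U.card : ℝ)
    · obtain ⟨l, hlen, htp, hcp, hmem⟩ := hext U hbig
      have hnodup : l.Nodup := htp.1
      have htofin : l.toFinset ⊆ U := fun v hv => hmem v (List.mem_toFinset.1 hv)
      have hcardto : l.toFinset.card = L := by
        rw [List.toFinset_card_of_nodup hnodup, hlen]
      obtain ⟨v₀, hv₀⟩ : ∃ v, v ∈ l := by
        refine List.exists_mem_of_ne_nil l ?_
        intro hnil
        rw [hnil] at hlen
        simp at hlen
        omega
      have hssub : U \ l.toFinset ⊂ U :=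
        Finset.sdiff_ssubset htofin ⟨v₀, List.mem_toFinset.2 hv₀⟩
      obtain ⟨Ps', hq1, hq2, hq3, hq4, hq5⟩ := ih _ hssub
      have hlPs' : l ∉ Ps' := by
        intro hmem'
        exact (Finset.mem_sdiff.1 (hq3 l hmem' v₀ hv₀)).2 (List.mem_toFinset.2 hv₀)
      refine ⟨insert l Ps', ?_, ?_, ?_, ?_, ?_⟩
      · intro p hp
        rcases Finset.mem_insert.1 hp with rfl | hp'
        · exact ⟨htp, hcp⟩
        · exact hq1 p hp'
      · intro p hp p' hp' hpp' v hvp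
        rcases Finset.mem_insert.1 hp with rfl | hp1 <;>
          rcases Finset.mem_insert.1 hp' with rfl | hp2
        · exact absurd rfl hpp'
        · intro hvq
          exact (Finset.mem_sdiff.1 (hq3 _ hp2 v hvq)).2 (List.mem_toFinset.2 hvp)
        · intro hvq
          exact (Finset.mem_sdiff.1 (hq3 _ hp1 v hvp)).2 (List.mem_toFinset.2 hvq)
        · exact hq2 _ hp1 _ hp2 hpp' v hvp
      · intro p hp v hv
        rcases Finset.mem_insert.1 hp with rfl | hp'
        · exact hmem v hv
        · exact (Finset.mem_sdiff.1 (hq3 p hp' v hv)).1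
      · rw [Finset.card_insert_of_notMem hlPs', add_mul, one_mul]
        have hsd : (U \ l.toFinset).card = U.card - L := by
          rw [Finset.card_sdiff_of_subset htofin, hcardto]
        have hLle : L ≤ U.card := hcardto ▸ Finset.card_le_card htofin
        set A := Ps'.card * L with hA
        omega
      · have hsub2 : U.filter (fun v => ∀ p ∈ insert l Ps', v ∉ p) ⊆
            (U \ l.toFinset).filter (fun v => ∀ p ∈ Ps', v ∉ p) := by
          intro v hv
          rw [Finset.mem_filter] at hv ⊢
          obtain ⟨hvU, hall⟩ := hv
          refine ⟨Finset.mem_sdiff.2 ⟨hvU, ?_⟩,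
            fun p hp => hall p (Finset.mem_insert_of_mem hp)⟩
          intro hvl
          exact hall l (Finset.mem_insert_self _ _) (List.mem_toFinset.1 hvl)
        calc ((U.filter (fun v => ∀ p ∈ insert l Ps', v ∉ p)).card : ℝ)
            ≤ _ := Nat.cast_le.2 (Finset.card_le_card hsub2)
          _ ≤ bound := hq5
    · refine ⟨∅, by simp, by simp, by simp, by simp, ?_⟩
      have hfe : U.filter (fun v => ∀ l ∈ (∅ : Finset (List (Fin n))), v ∉ l) = U := by
        apply Finset.filter_true_of_mem
        intro v _
        simp
      rw [hfe]
      linarith [not_lt.1 hbig]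

end AlmostCoverAux


/- STATEMENT 2: Almost Covering Lemma. -/
open Classical in
theorem statement_2 :
    ∀ d γ : ℝ, 0 < d → d ≤ 1 → 0 < γ → γ ≤ 1 →
      ∃ ρ β : ℝ, 0 < ρ ∧ 0 < β ∧ ∃ n₀ : ℕ, ∀ n : ℕ, n₀ ≤ n →
        ∀ E : Finset (Finset (Fin n)), ThreeUniform E → VvvDense E ρ d →
          ∃ Ps : Finset (List (Fin n)),
            (Ps.card : ℝ) ≤ 1 / β ∧
            (∀ l ∈ Ps, TightPath E l ∧ ConnectablePath E β l) ∧
            (∀ l ∈ Ps, ∀ l' ∈ Ps, l ≠ l' → ∀ v : Fin n, v ∈ l → v ∉ l') ∧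
            ((univ.filter (fun v : Fin n => ∀ l ∈ Ps, v ∉ l)).card : ℝ) ≤ γ ^ 2 * n := by
  intro d γ hd0 hd1 hγ0 hγ1
  classical
  refine ⟨d * γ ^ 6 / 2, d * γ ^ 6 / 1000, by positivity, by positivity,
    ⌈(1000 : ℝ) / (d * γ ^ 6)⌉₊, ?_⟩
  intro n hn E hu hdense
  have hγ6pos : (0:ℝ) < d * γ ^ 6 := by positivity
  have hβpos : (0:ℝ) < d * γ ^ 6 / 1000 := by positivity
  have hn' : (1000 : ℝ) / (d * γ ^ 6) ≤ n :=
    le_trans (Nat.le_ceil _) (Nat.cast_le.2 hn)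
  have hn1000 : (1000 : ℝ) ≤ d * γ ^ 6 * n := by
    rw [div_le_iff₀ hγ6pos] at hn'
    linarith [hn']
  have hγ61 : d * γ ^ 6 ≤ 1 := by
    have h1 : γ ^ 6 ≤ 1 := pow_le_one₀ (le_of_lt hγ0) hγ1
    nlinarith
  have hnR : (1000 : ℝ) ≤ n := by
    nlinarith [hn1000, hγ61, Nat.cast_nonneg (α := ℝ) n]
  have hnpos : (0:ℝ) < n := by linarith
  set k := ⌈(d * γ ^ 6 / 1000) * (n:ℝ)⌉₊ with hkdef
  have hkβ : (d * γ ^ 6 / 1000) * (n:ℝ) ≤ (k:ℝ) := Nat.le_ceil _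
  have hk1 : (k:ℝ) < (d * γ ^ 6 / 1000) * n + 1 := Nat.ceil_lt_add_one (by positivity)
  have hcrit : (27 : ℝ) * (3 * k + 3) * n * n <
      (d * γ ^ 6 - d * γ ^ 6 / 2) * (n : ℝ) ^ 3 := by
    have hnn : (0:ℝ) < (n:ℝ) * n := by positivity
    have h7 : (3 * (k:ℝ) + 3) * ((n:ℝ) * n) <
        (3 * (d * γ ^ 6 / 1000 * n) + 6) * ((n:ℝ) * n) := by
      apply mul_lt_mul_of_pos_right _ hnn
      linarith [hk1]
    have h6 : (1000:ℝ) * ((n:ℝ) * n) ≤ d * γ ^ 6 * n * ((n:ℝ) * n) :=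
      mul_le_mul_of_nonneg_right hn1000 (le_of_lt hnn)
    nlinarith [h7, h6]
  have hext : ∀ U : Finset (Fin n), γ ^ 2 * (n:ℝ) < (U.card : ℝ) →
      ∃ l : List (Fin n), l.length = 2 * k + 3 ∧ TightPath E l ∧
        ConnectablePath E (d * γ ^ 6 / 1000) l ∧ ∀ v ∈ l, v ∈ U := by
    intro U hU
    exact extract k hu hdense hd0 hγ0 hkβ hcrit hU
  obtain ⟨Ps, hP1, hP2, hP3, hP4, hP5⟩ :=
    cover E (d * γ ^ 6 / 1000) (γ ^ 2 * (n:ℝ)) (2 * k + 3) (by omega) hext Finset.univ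
  refine ⟨Ps, ?_, hP1, hP2, ?_⟩
  · have hcardn : Ps.card * (2 * k + 3) ≤ n := by
      have := hP4
      simpa using this
    have hcast : ((Ps.card * (2 * k + 3) : ℕ) : ℝ) ≤ (n : ℝ) := Nat.cast_le.2 hcardn
    push_cast at hcast
    have hstep : (Ps.card : ℝ) * ((d * γ ^ 6 / 1000) * n) ≤ (n:ℝ) := by
      have h8 : (d * γ ^ 6 / 1000) * (n:ℝ) ≤ 2 * (k:ℝ) + 3 := by linarith [hkβ]
      nlinarith [Nat.cast_nonneg (α := ℝ) Ps.card, h8, hcast]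
    rw [le_div_iff₀ hβpos]
    nlinarith [hstep, hnpos]
  · exact hP5
end

section
/- For every ξ > 0 and all positive integers k, ℓ there exist ζ > 0 and n₀ such that the following holds. Let F and F' be 3-uniform hypergraphs with |V(F)| = k and |V(F')| = ℓ such that there is a homomorphism from F' to F. If a 3-uniform hypergraph H on n ≥ n₀ vertices contains at least ξ·n^k copies of F, then H contains at least ζ·n^ℓ copies of F'. -/
open Finset

variable {n : ℕ}

section Aux
open Function

open Classical in
lemma fiber_card {ι κ : Type*} [Fintype ι] [Fintype κ] [DecidableEq ι] [DecidableEq κ] (n : ℕ) (e : κ → ι)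
    (he : Function.Injective e) (ψ : κ → Fin n) :
    (univ.filter fun g : ι → Fin n => g ∘ e = ψ).card
      = n ^ (Fintype.card ι - Fintype.card κ) := by
  have h1 : (univ.filter fun g : ι → Fin n => g ∘ e = ψ).card
      = Fintype.card {g : ι → Fin n // g ∘ e = ψ} := (Fintype.card_subtype _).symm
  rw [h1]
  have equiv : {g : ι → Fin n // g ∘ e = ψ} ≃ ({i : ι // i ∉ Set.range e} → Fin n) := by
    refine ⟨fun g i => g.1 i.1, fun f => ⟨fun i => if h : ∃ x, e x = i then ψ h.choose
      else f ⟨i, by simpa [Set.range] using h⟩, ?_⟩, ?_, ?_⟩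
    · funext x
      have h : ∃ y, e y = e x := ⟨x, rfl⟩
      simp only [Function.comp_apply, dif_pos h]
      have := h.choose_spec
      rw [he this]
    · rintro ⟨g, hg⟩
      ext i
      by_cases h : ∃ x, e x = i
      · simp only [dif_pos h]
        have h2 := h.choose_spec
        conv_rhs => rw [← h2]
        rw [show g (e h.choose) = ψ h.choose from congrFun hg _]
      · simp [dif_neg h]
    · intro f
      funext i
      simp [(show ¬ ∃ x, e x = i.1 by simpa [Set.range] using i.2)]
  rw [Fintype.card_congr equiv, Fintype.card_fun, Fintype.card_fin]
  congr 1
  have h3 : Fintype.card {i : ι // i ∈ Set.range e} = Fintype.card κ := by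
    rw [← Set.card_range_of_injective he]
  rw [Fintype.card_subtype_compl, h3]

open Classical in
lemma pullback_card {ι κ : Type*} [Fintype ι] [Fintype κ] [DecidableEq ι] [DecidableEq κ] (n : ℕ) (e : κ → ι)
    (he : Function.Injective e) (p : (κ → Fin n) → Prop) :
    (univ.filter fun g : ι → Fin n => p (g ∘ e)).card
      = (univ.filter p).card * n ^ (Fintype.card ι - Fintype.card κ) := by
  rw [Finset.card_eq_sum_card_fiberwise
    (f := fun g : ι → Fin n => g ∘ e) (t := univ.filter p) (by
      intro g hg; simp only [mem_coe, mem_filter, mem_univ, true_and] at hg ⊢; exact hg)]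
  rw [Finset.sum_congr rfl (fun ψ hψ => ?_), Finset.sum_const, smul_eq_mul]
  simp only [mem_filter, mem_univ, true_and] at hψ
  rw [← fiber_card n e he ψ]
  congr 1
  ext g
  simp only [mem_filter, mem_univ, true_and, and_iff_right_iff_imp]
  intro h; rw [h]; exact hψ


open Classical in
lemma cs_dup {ι : Type*} [Fintype ι] [DecidableEq ι] {n : ℕ} (u w : ι) (huw : u ≠ w)
    (S : (ι → Fin n) → Prop)
    (hindep : ∀ g y, S g → S (Function.update g w y)) :
    (univ.filter S).card ^ 2
      ≤ n ^ (Fintype.card ι) *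
        (univ.filter fun g : ι → Fin n => S g ∧ S (Function.update g u (g w))).card := by
  set B := (univ.filter S).card with hB
  set A := (univ.filter fun g : ι → Fin n =>
    S g ∧ S (Function.update g u (g w))).card with hA
  set W : (ι → Fin n) → ℕ := fun h => (univ.filter fun x : Fin n => S (update h u x)).card
    with hW
  have upd_calc : ∀ (g : ι → Fin n) (a b c : Fin n),
      update (update (update g u a) w b) u c = update (update g u c) w b := by
    intro g a b c
    funext i
    by_cases h1 : i = u <;> by_cases h2 : i = w <;>
      simp_all [Function.update_apply]
  -- step (a)
  have ha : ∑ h : ι → Fin n, W h = n * B := by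
    have h1 : (univ.filter fun p : (ι → Fin n) × Fin n => S (update p.1 u p.2)).card
        = ∑ h : ι → Fin n, W h := by
      rw [Finset.card_filter, Fintype.sum_prod_type]
      exact Finset.sum_congr rfl fun h _ => (Finset.card_filter _ _).symm
    rw [← h1]
    rw [Finset.card_eq_sum_card_fiberwise
      (f := fun p : (ι → Fin n) × Fin n => update p.1 u p.2) (t := univ.filter S) (by
        intro p hp
        simp only [mem_coe, mem_filter, mem_univ, true_and] at hp ⊢
        exact hp)]
    have hfib : ∀ g ∈ univ.filter S,
        ((univ.filter fun p : (ι → Fin n) × Fin n => S (update p.1 u p.2)).filter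
          (fun p => update p.1 u p.2 = g)).card = n := by
      intro g hg
      simp only [mem_filter, mem_univ, true_and] at hg
      have hbij : ((univ.filter fun p : (ι → Fin n) × Fin n => S (update p.1 u p.2)).filter
          (fun p => update p.1 u p.2 = g)).card = ((univ : Finset (Fin n))).card := by
        apply Finset.card_bij'
          (i := fun (p : (ι → Fin n) × Fin n) _ => p.1 u)
          (j := fun y _ => (update g u y, g u))
        · intro p hp; exact mem_univ _
        · intro y hy
          simp only [mem_filter, mem_univ, true_and]
          have key : update (update g u y) u (g u) = g := by
            rw [Function.update_idem, Function.update_eq_self]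
          exact ⟨by rw [key]; exact hg, key⟩
        · rintro ⟨h, x⟩ hp
          simp only [mem_filter, mem_univ, true_and] at hp
          obtain ⟨-, hp2⟩ := hp
          simp only [Prod.mk.injEq]
          constructor
          · rw [← hp2, Function.update_idem, Function.update_eq_self]
          · rw [← hp2, Function.update_self]
        · intro y hy
          simp
      rw [hbij, Finset.card_univ, Fintype.card_fin]
    rw [Finset.sum_congr rfl hfib, Finset.sum_const, smul_eq_mul, hB, mul_comm]
  -- step (b)
  have hb : ∑ h : ι → Fin n, W h ^ 2 = n ^ 2 * A := by
    have hWh : ∀ h : ι → Fin n, W h ^ 2 = ∑ x : Fin n, ∑ y : Fin n,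
        if S (update h u x) ∧ S (update h u y) then 1 else 0 := by
      intro h
      rw [hW]
      simp only
      rw [sq, Finset.card_filter, Finset.sum_mul_sum]
      refine Finset.sum_congr rfl fun x _ => Finset.sum_congr rfl fun y _ => ?_
      by_cases h1 : S (update h u x) <;> by_cases h2 : S (update h u y) <;> simp [h1, h2]
    have h1 : (univ.filter fun p : (ι → Fin n) × Fin n × Fin n =>
        S (update p.1 u p.2.1) ∧ S (update p.1 u p.2.2)).card
        = ∑ h : ι → Fin n, W h ^ 2 := by
      rw [Finset.card_filter, Fintype.sum_prod_type]
      refine Finset.sum_congr rfl fun h _ => ?_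
      rw [hWh h, Fintype.sum_prod_type]
    rw [← h1]
    rw [Finset.card_eq_sum_card_fiberwise
      (f := fun p : (ι → Fin n) × Fin n × Fin n => update (update p.1 u p.2.1) w p.2.2)
      (t := univ.filter fun g : ι → Fin n => S g ∧ S (Function.update g u (g w))) (by
        intro p hp
        simp only [mem_coe, mem_filter, mem_univ, true_and] at hp ⊢
        obtain ⟨hx, hy⟩ := hp
        refine ⟨hindep _ _ hx, ?_⟩
        have hgw : update (update p.1 u p.2.1) w p.2.2 w = p.2.2 := Function.update_self _ _ _
        rw [hgw, upd_calc]
        exact hindep _ _ hy)]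
    have hfib : ∀ g ∈ (univ.filter fun g : ι → Fin n =>
        S g ∧ S (Function.update g u (g w))),
        ((univ.filter fun p : (ι → Fin n) × Fin n × Fin n =>
          S (update p.1 u p.2.1) ∧ S (update p.1 u p.2.2)).filter
          (fun p => update (update p.1 u p.2.1) w p.2.2 = g)).card = n ^ 2 := by
      intro g hg
      simp only [mem_filter, mem_univ, true_and] at hg
      obtain ⟨hg1, hg2⟩ := hg
      have hbij : ((univ.filter fun p : (ι → Fin n) × Fin n × Fin n =>
          S (update p.1 u p.2.1) ∧ S (update p.1 u p.2.2)).filter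
          (fun p => update (update p.1 u p.2.1) w p.2.2 = g)).card
          = ((univ : Finset (Fin n × Fin n))).card := by
        apply Finset.card_bij'
          (i := fun (p : (ι → Fin n) × Fin n × Fin n) _ => (p.1 u, p.1 w))
          (j := fun (ab : Fin n × Fin n) _ => (update (update g u ab.1) w ab.2, g u, g w))
        · intro p hp; exact mem_univ _
        · rintro ⟨a, b⟩ hab
          simp only [mem_filter, mem_univ, true_and]
          refine ⟨⟨?_, ?_⟩, ?_⟩
          · have key : update (update (update g u a) w b) u (g u) = update g w b := by
              rw [upd_calc, Function.update_eq_self]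
            rw [key]
            exact hindep _ _ hg1
          · have key : update (update (update g u a) w b) u (g w)
                = update (update g u (g w)) w b := upd_calc g a b (g w)
            rw [key]
            exact hindep _ _ hg2
          · rw [upd_calc, Function.update_idem, Function.update_eq_self,
              Function.update_eq_self]
        · rintro ⟨h, x, y⟩ hp
          simp only [mem_filter, mem_univ, true_and] at hp
          obtain ⟨-, hp3⟩ := hp
          have hgu : g u = x := by rw [← hp3, Function.update_of_ne huw, Function.update_self]
          have hgw : g w = y := by rw [← hp3, Function.update_self]
          simp only [Prod.mk.injEq]
          refine ⟨?_, hgu, hgw⟩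
          funext i
          by_cases h2 : i = w
          · subst h2; rw [Function.update_self]
          · by_cases h1 : i = u
            · subst h1; rw [Function.update_of_ne huw, Function.update_self]
            · rw [Function.update_of_ne h2, Function.update_of_ne h1, ← hp3,
                Function.update_of_ne h2, Function.update_of_ne h1]
        · rintro ⟨a, b⟩ hab
          simp only [Prod.mk.injEq]
          constructor
          · rw [Function.update_of_ne huw, Function.update_self]
          · rw [Function.update_self]
      rw [hbij, Finset.card_univ, Fintype.card_prod, Fintype.card_fin, ← sq]
    rw [Finset.sum_congr rfl hfib, Finset.sum_const, smul_eq_mul, hA, mul_comm]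

  -- Cauchy-Schwarz
  have hcs : ((∑ h : ι → Fin n, W h : ℕ) : ℝ) ^ 2
      ≤ (n : ℝ) ^ (Fintype.card ι) * ((∑ h : ι → Fin n, W h ^ 2 : ℕ) : ℝ) := by
    push_cast
    have h := sq_sum_le_card_mul_sum_sq (s := (univ : Finset (ι → Fin n)))
      (f := fun h => (W h : ℝ))
    simp only [Finset.card_univ] at h
    calc (∑ h : ι → Fin n, (W h : ℝ)) ^ 2
        ≤ (Fintype.card (ι → Fin n) : ℝ) * ∑ h : ι → Fin n, (W h : ℝ) ^ 2 := h
      _ = (n : ℝ) ^ (Fintype.card ι) * ∑ h : ι → Fin n, (W h : ℝ) ^ 2 := by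
          rw [Fintype.card_fun, Fintype.card_fin]; push_cast; ring
  rw [ha, hb] at hcs
  rcases Nat.eq_zero_or_pos n with rfl | hn
  · have hempty : IsEmpty (ι → Fin 0) := ⟨fun g => (g u).elim0⟩
    have hB0 : B = 0 := by
      rw [hB]
      rw [Finset.univ_eq_empty, Finset.filter_empty, Finset.card_empty]
    rw [hB0]
    simp
  · have hn' : (0 : ℝ) < (n : ℝ) ^ 2 := by positivity
    have key : ((B : ℝ)) ^ 2 ≤ (n : ℝ) ^ (Fintype.card ι) * A := by
      have h2 : (n : ℝ) ^ 2 * (B : ℝ) ^ 2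
          ≤ (n : ℝ) ^ 2 * ((n : ℝ) ^ (Fintype.card ι) * A) := by
        calc (n : ℝ) ^ 2 * (B : ℝ) ^ 2 = ((n * B : ℕ) : ℝ) ^ 2 := by push_cast; ring
          _ ≤ (n : ℝ) ^ (Fintype.card ι) * ((n ^ 2 * A : ℕ) : ℝ) := hcs
          _ = (n : ℝ) ^ 2 * ((n : ℝ) ^ (Fintype.card ι) * A) := by push_cast; ring
      exact le_of_mul_le_mul_left h2 hn'
    exact_mod_cast key


def SatC {n k ℓ : ℕ} (F : Finset (Finset (Fin k))) (H : Finset (Finset (Fin n)))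
    (c : Fin k → ℕ) (g : Fin k × Fin ℓ → Fin n) : Prop :=
  ∀ e ∈ F, ∀ f : Fin k → Fin ℓ, (∀ v ∈ e, (f v).val < c v) →
    e.image (fun v => g (v, f v)) ∈ H

lemma satc_indep {n k ℓ : ℕ} {F : Finset (Finset (Fin k))} {H : Finset (Finset (Fin n))}
    {c : Fin k → ℕ} {g : Fin k × Fin ℓ → Fin n} (v₀ : Fin k) (i₀ : Fin ℓ)
    (hi : c v₀ ≤ i₀.val) (y : Fin n) (hg : SatC F H c g) :
    SatC F H c (Function.update g (v₀, i₀) y) := by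
  intro e he f hf
  have heq : e.image (fun v => Function.update g (v₀, i₀) y (v, f v))
      = e.image (fun v => g (v, f v)) := by
    apply Finset.image_congr
    intro v hv
    have : (v, f v) ≠ (v₀, i₀) := by
      intro h
      rw [Prod.mk.injEq] at h
      obtain ⟨h1, h2⟩ := h
      subst h1
      have := hf v hv
      rw [h2] at this
      omega
    simp only [Function.update_of_ne this]
  rw [heq]
  exact hg e he f hf

lemma satc_dup {n k ℓ : ℕ} {F : Finset (Finset (Fin k))} {H : Finset (Finset (Fin n))}
    {c : Fin k → ℕ} {g : Fin k × Fin ℓ → Fin n} (v₀ : Fin k) (hl : 0 < ℓ)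
    (h1 : 1 ≤ c v₀) (h2 : c v₀ < ℓ)
    (hg : SatC F H c g)
    (hg' : SatC F H c (Function.update g (v₀, ⟨0, hl⟩) (g (v₀, ⟨c v₀, h2⟩)))) :
    SatC F H (Function.update c v₀ (c v₀ + 1)) g := by
  intro e he f hf
  by_cases hcase : v₀ ∈ e ∧ (f v₀).val = c v₀
  · obtain ⟨hv₀, hfv₀⟩ := hcase
    have hb : ∀ v ∈ e, ((Function.update f v₀ (⟨0, hl⟩ : Fin ℓ)) v).val < c v := by
      intro v hv
      by_cases h : v = v₀
      · subst h; rw [Function.update_self]; exact h1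
      · rw [Function.update_of_ne h]
        have := hf v hv
        rwa [Function.update_of_ne h] at this
    have := hg' e he _ hb
    have heq : e.image (fun v => (Function.update g (v₀, ⟨0, hl⟩)
          (g (v₀, ⟨c v₀, h2⟩))) (v, Function.update f v₀ (⟨0, hl⟩ : Fin ℓ) v))
        = e.image (fun v => g (v, f v)) := by
      apply Finset.image_congr
      intro v hv
      dsimp only
      by_cases h : v = v₀
      · rw [h, Function.update_self, Function.update_self]
        congr 1
        rw [Prod.mk.injEq]
        refine ⟨rfl, ?_⟩
        apply Fin.ext
        simpa using hfv₀.symm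
      · rw [Function.update_of_ne h, Function.update_of_ne (by
          intro hc; rw [Prod.mk.injEq] at hc; exact h hc.1)]
    rwa [heq] at this
  · apply hg e he f
    intro v hv
    by_cases h : v = v₀
    · have hb := hf v hv
      rw [h, Function.update_self] at hb
      have hne : (f v₀).val ≠ c v₀ := fun hcc => hcase ⟨h ▸ hv, hcc⟩
      rw [h]
      omega
    · have hb := hf v hv
      rwa [Function.update_of_ne h] at hb

lemma satc_base {n k ℓ : ℕ} {F : Finset (Finset (Fin k))} {H : Finset (Finset (Fin n))}
    {g : Fin k × Fin ℓ → Fin n} (hl : 0 < ℓ)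
    (hg : ∀ e ∈ F, e.image (fun v => g (v, (⟨0, hl⟩ : Fin ℓ))) ∈ H) :
    SatC F H (fun _ => 1) g := by
  intro e he f hf
  have heq : e.image (fun v => g (v, f v))
      = e.image (fun v => g (v, (⟨0, hl⟩ : Fin ℓ))) := by
    apply Finset.image_congr
    intro v hv
    dsimp only
    have := hf v hv
    congr 1
    rw [Prod.mk.injEq]
    exact ⟨rfl, Fin.ext (by simpa using this)⟩
  rw [heq]
  exact hg e he

open Classical in
lemma satc_top {n k ℓ : ℕ} {F : Finset (Finset (Fin k))} {F' : Finset (Finset (Fin ℓ))}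
    {H : Finset (Finset (Fin n))} (hl : 0 < ℓ)
    (hF : ∀ e ∈ F, Finset.card e = 3) (hF' : ∀ e ∈ F', Finset.card e = 3)
    (φ : Fin ℓ → Fin k) (hφ : ∀ e ∈ F', e.image φ ∈ F)
    {g : Fin k × Fin ℓ → Fin n} (hg : SatC F H (fun _ => ℓ) g) :
    ∀ e' ∈ F', e'.image (fun v => g (φ v, v)) ∈ H := by
  intro e' he'
  have hinj : Set.InjOn φ e' := by
    rw [← Finset.card_image_iff]
    rw [hF _ (hφ e' he'), hF' e' he']
  set f : Fin k → Fin ℓ := fun u =>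
    if h : ∃ v, v ∈ e' ∧ φ v = u then h.choose else ⟨0, hl⟩ with hf
  have hfspec : ∀ v ∈ e', f (φ v) = v := by
    intro v hv
    have h : ∃ v', v' ∈ e' ∧ φ v' = φ v := ⟨v, hv, rfl⟩
    rw [hf]
    simp only [dif_pos h]
    have := h.choose_spec
    exact hinj this.1 hv this.2
  have := hg (e'.image φ) (hφ e' he') f (fun v _ => (f v).isLt)
  rw [Finset.image_image] at this
  have heq : e'.image ((fun u => g (u, f u)) ∘ φ) = e'.image (fun v => g (φ v, v)) := by
    apply Finset.image_congr
    intro v hv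
    simp only [Function.comp_apply]
    rw [hfspec v hv]
  rwa [heq] at this


open Classical in
lemma pair_card {ℓ n : ℕ} (a b : Fin ℓ) (hab : a ≠ b) :
    (univ.filter fun ψ : Fin ℓ → Fin n => ψ a = ψ b).card ≤ n ^ (ℓ - 1) := by
  classical
  have hsub : Fintype.card {x : Fin ℓ // x ≠ b} = ℓ - 1 := by
    have := Fintype.card_subtype_compl (α := Fin ℓ) (p := fun x => x = b)
    rw [Fintype.card_subtype_eq, Fintype.card_fin] at this
    exact this
  have hc : Fintype.card ({x : Fin ℓ // x ≠ b} → Fin n) = n ^ (ℓ - 1) := by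
    rw [Fintype.card_fun, Fintype.card_fin, hsub]
  calc (univ.filter fun ψ : Fin ℓ → Fin n => ψ a = ψ b).card
      ≤ (univ : Finset ({x : Fin ℓ // x ≠ b} → Fin n)).card := by
        apply Finset.card_le_card_of_injOn (fun ψ => fun x => ψ x.1)
        · intro ψ _; exact mem_univ _
        · intro ψ hψ ψ' hψ' heq
          simp only [coe_filter, mem_univ, true_and, Set.mem_setOf_eq] at hψ hψ'
          funext x
          by_cases hx : x = b
          · subst hx
            rw [← hψ, ← hψ']
            exact congrFun heq ⟨a, hab⟩
          · exact congrFun heq ⟨x, hx⟩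
    _ = n ^ (ℓ - 1) := by rw [Finset.card_univ, hc]

open Classical in
lemma noninj_card (ℓ n : ℕ) :
    (univ.filter fun ψ : Fin ℓ → Fin n => ¬ Function.Injective ψ).card
      ≤ ℓ * ℓ * n ^ (ℓ - 1) := by
  classical
  have hsub : (univ.filter fun ψ : Fin ℓ → Fin n => ¬ Function.Injective ψ)
      ⊆ (univ : Finset (Fin ℓ)).offDiag.biUnion
        (fun p => univ.filter fun ψ : Fin ℓ → Fin n => ψ p.1 = ψ p.2) := by
    intro ψ hψ
    simp only [mem_filter, mem_univ, true_and] at hψ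
    rw [Function.not_injective_iff] at hψ
    obtain ⟨a, b, h1, h2⟩ := hψ
    apply Finset.mem_biUnion.2
    exact ⟨(a, b), Finset.mem_offDiag.2 ⟨mem_univ _, mem_univ _, h2⟩,
      by simp [h1]⟩
  calc (univ.filter fun ψ : Fin ℓ → Fin n => ¬ Function.Injective ψ).card
      ≤ ((univ : Finset (Fin ℓ)).offDiag.biUnion
        (fun p => univ.filter fun ψ : Fin ℓ → Fin n => ψ p.1 = ψ p.2)).card :=
        Finset.card_le_card hsub
    _ ≤ ∑ p ∈ (univ : Finset (Fin ℓ)).offDiag,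
        (univ.filter fun ψ : Fin ℓ → Fin n => ψ p.1 = ψ p.2).card :=
        Finset.card_biUnion_le
    _ ≤ ∑ _p ∈ (univ : Finset (Fin ℓ)).offDiag, n ^ (ℓ - 1) := by
        apply Finset.sum_le_sum
        intro p hp
        exact pair_card p.1 p.2 (Finset.mem_offDiag.1 hp).2.2
    _ = (univ : Finset (Fin ℓ)).offDiag.card * n ^ (ℓ - 1) := by
        rw [Finset.sum_const, smul_eq_mul]
    _ ≤ ℓ * ℓ * n ^ (ℓ - 1) := by
        apply Nat.mul_le_mul_right
        rw [Finset.offDiag_card]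
        simp only [Finset.card_univ, Fintype.card_fin]
        omega


lemma card_filter_congr' {α : Type*} [Fintype α] {p q : α → Prop} (hp : DecidablePred p)
    (hq : DecidablePred q) (h : ∀ x, p x ↔ q x) :
    (@Finset.filter α p hp Finset.univ).card = (@Finset.filter α q hq Finset.univ).card := by
  congr 1
  ext x
  simp only [Finset.mem_filter, Finset.mem_univ, true_and]
  exact h x

end Aux

section Aux2
open Function

open Classical in
lemma pullback_card₂ {ι κ : Type*} [Fintype ι] [Fintype κ] [DecidableEq ι] [DecidableEq κ] (n : ℕ) (e : κ → ι)
    (he : Function.Injective e) (p : (κ → Fin n) → Prop)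
    (hq : DecidablePred fun g : ι → Fin n => p (g ∘ e)) (hp : DecidablePred p) :
    (@Finset.filter _ (fun g : ι → Fin n => p (g ∘ e)) hq univ).card
      = (@Finset.filter _ p hp univ).card * n ^ (Fintype.card ι - Fintype.card κ) := by
  calc (@Finset.filter _ (fun g : ι → Fin n => p (g ∘ e)) hq univ).card
      = _ := card_filter_congr' hq (fun a => Classical.propDecidable _) (fun x => Iff.rfl)
    _ = _ := pullback_card n e he p
    _ = (@Finset.filter _ p hp univ).card * n ^ (Fintype.card ι - Fintype.card κ) :=
        congrArg (· * n ^ (Fintype.card ι - Fintype.card κ))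
          (card_filter_congr' _ hp (fun x => Iff.rfl))

open Classical in
lemma cs_dup₂ {ι : Type*} [Fintype ι] [DecidableEq ι] {n : ℕ} (u w : ι) (huw : u ≠ w)
    (S : (ι → Fin n) → Prop)
    (hindep : ∀ g y, S g → S (Function.update g w y))
    (hS : DecidablePred S)
    (hA : DecidablePred fun g : ι → Fin n => S g ∧ S (Function.update g u (g w))) :
    (@Finset.filter _ S hS univ).card ^ 2
      ≤ n ^ (Fintype.card ι) * (@Finset.filter _
          (fun g : ι → Fin n => S g ∧ S (Function.update g u (g w))) hA univ).card := by
  calc (@Finset.filter _ S hS univ).card ^ 2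
      = (@Finset.filter _ S (fun a => Classical.propDecidable _) univ).card ^ 2 := by
        rw [card_filter_congr' hS (fun a => Classical.propDecidable _) (fun x => Iff.rfl)]
    _ ≤ n ^ (Fintype.card ι) * (@Finset.filter _
          (fun g : ι → Fin n => S g ∧ S (Function.update g u (g w)))
          (fun a => @instDecidableAnd _ _ (Classical.propDecidable _)
            (Classical.propDecidable _)) univ).card :=
        cs_dup u w huw S hindep
    _ = n ^ (Fintype.card ι) * (@Finset.filter _
          (fun g : ι → Fin n => S g ∧ S (Function.update g u (g w))) hA univ).card :=
        congrArg (n ^ (Fintype.card ι) * ·) (card_filter_congr' _ hA (fun x => Iff.rfl))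

open Classical in
lemma step0 {n k ℓ : ℕ} (hℓ : 0 < ℓ) (F : Finset (Finset (Fin k)))
    (H : Finset (Finset (Fin n))) :
    (univ.filter fun ψ : Fin k → Fin n => ∀ e ∈ F, e.image ψ ∈ H).card * n ^ (k * ℓ - k)
      ≤ (univ.filter (SatC (ℓ := ℓ) F H (fun _ => 1))).card := by
  have he₀ : Function.Injective (fun v : Fin k => ((v, ⟨0, hℓ⟩) : Fin k × Fin ℓ)) :=
    fun a b hab => congrArg Prod.fst hab
  have h := pullback_card₂ n _ he₀ (fun ψ : Fin k → Fin n => ∀ e ∈ F, e.image ψ ∈ H)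
    inferInstance inferInstance
  rw [show Fintype.card (Fin k × Fin ℓ) - Fintype.card (Fin k) = k * ℓ - k by simp] at h
  refine le_trans (le_of_eq h.symm) ?_
  apply Finset.card_le_card
  intro g hg
  simp only [Finset.mem_filter, Finset.mem_univ, true_and] at hg ⊢
  exact satc_base hℓ hg

open Classical in
lemma steptop {n k ℓ : ℕ} (hℓ : 0 < ℓ) (F : Finset (Finset (Fin k)))
    (F' : Finset (Finset (Fin ℓ))) (H : Finset (Finset (Fin n)))
    (hF : ∀ e ∈ F, Finset.card e = 3) (hF' : ∀ e ∈ F', Finset.card e = 3)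
    (φ : Fin ℓ → Fin k) (hφ : ∀ e ∈ F', e.image φ ∈ F) :
    (univ.filter (SatC (ℓ := ℓ) F H (fun _ => ℓ))).card
      ≤ (univ.filter fun ψ : Fin ℓ → Fin n => ∀ e ∈ F', e.image ψ ∈ H).card
          * n ^ (k * ℓ - ℓ) := by
  have he₂ : Function.Injective (fun v : Fin ℓ => ((φ v, v) : Fin k × Fin ℓ)) :=
    fun a b hab => congrArg Prod.snd hab
  have h := pullback_card₂ n _ he₂ (fun ψ : Fin ℓ → Fin n => ∀ e ∈ F', e.image ψ ∈ H)
    inferInstance inferInstance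
  rw [show Fintype.card (Fin k × Fin ℓ) - Fintype.card (Fin ℓ) = k * ℓ - ℓ by simp] at h
  refine le_trans ?_ (le_of_eq h)
  apply Finset.card_le_card
  intro g hg
  simp only [Finset.mem_filter, Finset.mem_univ, true_and] at hg ⊢
  exact satc_top hℓ hF hF' φ hφ hg

open Classical in
lemma stepdup {n k ℓ : ℕ} (hℓ : 0 < ℓ) {F : Finset (Finset (Fin k))}
    {H : Finset (Finset (Fin n))} (c : Fin k → ℕ) (v₀ : Fin k)
    (h1 : 1 ≤ c v₀) (h2 : c v₀ < ℓ) :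
    (univ.filter (SatC (ℓ := ℓ) F H c)).card ^ 2
      ≤ n ^ (k * ℓ) *
        (univ.filter (SatC (ℓ := ℓ) F H (Function.update c v₀ (c v₀ + 1)))).card := by
  have huw : ((v₀, ⟨0, hℓ⟩) : Fin k × Fin ℓ) ≠ (v₀, ⟨c v₀, h2⟩) := by
    intro hcon
    have := congrArg Prod.snd hcon
    simp only [Fin.mk.injEq] at this
    omega
  have hindep : ∀ (g : Fin k × Fin ℓ → Fin n) (y : Fin n), SatC F H c g →
      SatC F H c (Function.update g (v₀, (⟨c v₀, h2⟩ : Fin ℓ)) y) :=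
    fun g y hg => satc_indep v₀ ⟨c v₀, h2⟩ (le_refl _) y hg
  have hcs := cs_dup₂ ((v₀, ⟨0, hℓ⟩) : Fin k × Fin ℓ) ((v₀, ⟨c v₀, h2⟩) : Fin k × Fin ℓ)
    huw (SatC F H c) hindep inferInstance inferInstance
  rw [show Fintype.card (Fin k × Fin ℓ) = k * ℓ by simp] at hcs
  refine hcs.trans (Nat.mul_le_mul_left _ (Finset.card_le_card ?_))
  intro g hg
  simp only [Finset.mem_filter, Finset.mem_univ, true_and] at hg ⊢
  exact satc_dup v₀ hℓ h1 h2 hg.1 hg.2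

end Aux2

lemma copy_le_hom {k n : ℕ} (F : Finset (Finset (Fin k))) (H : Finset (Finset (Fin n))) :
    copyCount F H ≤ (univ.filter fun ψ : Fin k → Fin n => ∀ e ∈ F, e.image ψ ∈ H).card := by
  simp only [copyCount]
  exact Finset.card_le_card (fun ψ hψ => by
    simp only [Finset.mem_filter] at hψ ⊢
    exact ⟨hψ.1, hψ.2.2⟩)

lemma hom_le_copy_add_noninj {ℓ n : ℕ} (F' : Finset (Finset (Fin ℓ)))
    (H : Finset (Finset (Fin n))) :
    (univ.filter fun ψ : Fin ℓ → Fin n => ∀ e ∈ F', e.image ψ ∈ H).card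
      ≤ copyCount F' H
        + (univ.filter fun ψ : Fin ℓ → Fin n => ¬ Function.Injective ψ).card := by
  have hsub : (univ.filter fun ψ : Fin ℓ → Fin n => ∀ e ∈ F', e.image ψ ∈ H)
      ⊆ (univ.filter fun ψ : Fin ℓ → Fin n =>
          Function.Injective ψ ∧ ∀ e ∈ F', e.image ψ ∈ H)
        ∪ (univ.filter fun ψ : Fin ℓ → Fin n => ¬ Function.Injective ψ) := by
    intro ψ hψ
    simp only [Finset.mem_filter, Finset.mem_union, Finset.mem_univ, true_and] at hψ ⊢
    by_cases h : Function.Injective ψ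
    · exact Or.inl ⟨h, hψ⟩
    · exact Or.inr h
  refine le_trans (Finset.card_le_card hsub)
    (le_trans (Finset.card_union_le _ _) (Nat.add_le_add_right ?_ _))
  simp only [copyCount]
  exact Finset.card_le_card (fun x hx => by
    simp only [Finset.mem_filter] at hx ⊢
    exact hx)

/- STATEMENT 8: supersaturation for homomorphic images. -/
theorem statement_8 :
    ∀ ξ : ℝ, 0 < ξ → ∀ k ℓ : ℕ, 0 < k → 0 < ℓ →
      ∃ ζ : ℝ, 0 < ζ ∧ ∃ n₀ : ℕ,
        ∀ (F : Finset (Finset (Fin k))) (F' : Finset (Finset (Fin ℓ))),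
          ThreeUniform F → ThreeUniform F' →
          (∃ φ : Fin ℓ → Fin k, ∀ e ∈ F', e.image φ ∈ F) →
          ∀ n : ℕ, n₀ ≤ n → ∀ H : Finset (Finset (Fin n)), ThreeUniform H →
            ξ * (n : ℝ) ^ k ≤ (copyCount F H : ℝ) →
            ζ * (n : ℝ) ^ ℓ ≤ (copyCount F' H : ℝ) := by
  intro ξ hξ k ℓ hk hℓ
  have hξ' : (0:ℝ) < min ξ 1 := lt_min hξ one_pos
  set ζ₂ : ℝ := (min ξ 1) ^ (2 ^ (k * (ℓ - 1))) with hζ₂def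
  have hζ₂ : 0 < ζ₂ := pow_pos hξ' _
  refine ⟨ζ₂ / 2, by positivity, ⌈(2 * (ℓ:ℝ) * ℓ) / ζ₂⌉₊ + 1, ?_⟩
  rintro F F' hF hF' ⟨φ, hφ⟩ n hn H hH hcopies
  have hn1 : 1 ≤ n := le_trans (by omega) hn
  have hnR : (0:ℝ) < (n:ℝ) := by exact_mod_cast hn1
  have hcopyhom : ξ * (n:ℝ) ^ k ≤
      ((univ.filter fun ψ : Fin k → Fin n => ∀ e ∈ F, e.image ψ ∈ H).card : ℝ) :=
    le_trans hcopies (by exact_mod_cast copy_le_hom F H)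
  have hkk : k ≤ k * ℓ := Nat.le_mul_of_pos_right k hℓ
  have hkl : ℓ ≤ k * ℓ := Nat.le_mul_of_pos_left ℓ hk
  open Classical in
  have main : ∀ s : ℕ, ∀ c : Fin k → ℕ, (∀ v, 1 ≤ c v ∧ c v ≤ ℓ) →
      (∑ v : Fin k, (c v - 1)) = s →
      (min ξ 1) ^ (2 ^ s) * (n:ℝ) ^ (k * ℓ)
        ≤ ((univ.filter (SatC (ℓ := ℓ) F H c)).card : ℝ) := by
    intro s
    induction s with
    | zero =>
      intro c hc hsum
      have hc1 : c = fun _ => 1 := by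
        funext v
        have h0 := (Finset.sum_eq_zero_iff).1 hsum v (Finset.mem_univ v)
        have h1 := (hc v).1
        omega
      subst hc1
      have hs0 := step0 (n := n) hℓ F H
      calc (min ξ 1) ^ 2 ^ 0 * (n:ℝ) ^ (k * ℓ)
          = (min ξ 1) * ((n:ℝ) ^ k * (n:ℝ) ^ (k * ℓ - k)) := by
            rw [pow_zero, pow_one, ← pow_add]
            congr 2
            omega
        _ ≤ (ξ * (n:ℝ) ^ k) * (n:ℝ) ^ (k * ℓ - k) := by
            rw [← mul_assoc]
            apply mul_le_mul_of_nonneg_right _ (by positivity)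
            apply mul_le_mul_of_nonneg_right (min_le_left _ _) (by positivity)
        _ ≤ (((univ.filter fun ψ : Fin k → Fin n => ∀ e ∈ F, e.image ψ ∈ H).card : ℝ))
              * (n:ℝ) ^ (k * ℓ - k) :=
            mul_le_mul_of_nonneg_right hcopyhom (by positivity)
        _ = (((univ.filter fun ψ : Fin k → Fin n => ∀ e ∈ F, e.image ψ ∈ H).card
              * n ^ (k * ℓ - k) : ℕ) : ℝ) := by push_cast; ring
        _ ≤ _ := by exact_mod_cast hs0
    | succ s ih =>
      intro c hc hsum
      have hex : ∃ v, 2 ≤ c v := by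
        by_contra hno
        push_neg at hno
        have hz : ∑ v : Fin k, (c v - 1) = 0 :=
          Finset.sum_eq_zero (fun v _ => by have := hno v; omega)
        omega
      obtain ⟨v₀, hv₀⟩ := hex
      have hcv₀ℓ := (hc v₀).2
      set c' : Fin k → ℕ := Function.update c v₀ (c v₀ - 1) with hc'def
      have hc'v₀ : c' v₀ = c v₀ - 1 := by rw [hc'def, Function.update_self]
      have hc'ne : ∀ v, v ≠ v₀ → c' v = c v := fun v hv => by
        rw [hc'def, Function.update_of_ne hv]
      have hc' : ∀ v, 1 ≤ c' v ∧ c' v ≤ ℓ := by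
        intro v
        by_cases h : v = v₀
        · subst h; rw [hc'v₀]; omega
        · rw [hc'ne v h]; exact hc v
      have hsum' : ∑ v : Fin k, (c' v - 1) = s := by
        have hfun : ∀ v, c' v - 1
            = Function.update (fun v => c v - 1) v₀ (c v₀ - 1 - 1) v := by
          intro v
          by_cases h : v = v₀
          · subst h; rw [hc'v₀, Function.update_self]
          · rw [hc'ne v h, Function.update_of_ne h]
        have h2 := Finset.add_sum_erase univ (fun v => c v - 1) (Finset.mem_univ v₀)
        rw [Finset.sum_congr rfl (fun v _ => hfun v),
          Finset.sum_update_of_mem (Finset.mem_univ v₀)]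
        simp only [Finset.erase_eq] at h2
        beta_reduce at h2 ⊢
        omega
      have ihc := ih c' hc' hsum'
      have hlt : c' v₀ < ℓ := by omega
      have hdup := stepdup (n := n) (F := F) (H := H) hℓ c' v₀ (hc' v₀).1 hlt
      have hcc : Function.update c' v₀ (c' v₀ + 1) = c := by
        funext v
        by_cases h : v = v₀
        · subst h; rw [Function.update_self, hc'v₀]; omega
        · rw [Function.update_of_ne h, hc'ne v h]
      rw [hcc] at hdup
      have hpos : (0:ℝ) < (n:ℝ) ^ (k * ℓ) := by positivity
      have h2R : ((univ.filter (SatC (ℓ := ℓ) F H c')).card : ℝ) ^ 2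
          ≤ (n:ℝ) ^ (k * ℓ) * ((univ.filter (SatC (ℓ := ℓ) F H c)).card : ℝ) := by
        exact_mod_cast hdup
      refine le_of_mul_le_mul_left ?_ hpos
      calc (n:ℝ)^(k*ℓ) * ((min ξ 1) ^ 2 ^ (s+1) * (n:ℝ)^(k*ℓ))
          = ((min ξ 1) ^ 2 ^ s * (n:ℝ)^(k*ℓ)) ^ 2 := by
            rw [pow_succ, pow_mul]; ring
        _ ≤ (((univ.filter (SatC (ℓ := ℓ) F H c')).card : ℝ)) ^ 2 :=
            pow_le_pow_left₀ (by positivity) ihc 2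
        _ ≤ (n:ℝ)^(k*ℓ) * ((univ.filter (SatC (ℓ := ℓ) F H c)).card : ℝ) := h2R
  have hsumfull : ∑ _v : Fin k, (ℓ - 1) = k * (ℓ - 1) := by
    rw [Finset.sum_const, Finset.card_univ, Fintype.card_fin, smul_eq_mul]
  have hfinal := main (k * (ℓ - 1)) (fun _ => ℓ) (fun v => ⟨hℓ, le_refl ℓ⟩) hsumfull
  have htop := steptop (n := n) hℓ F F' H hF hF' φ hφ
  have homF'bound : ζ₂ * (n:ℝ) ^ ℓ ≤
      ((univ.filter fun ψ : Fin ℓ → Fin n => ∀ e ∈ F', e.image ψ ∈ H).card : ℝ) := by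
    have hchain : ζ₂ * ((n:ℝ) ^ ℓ * (n:ℝ) ^ (k*ℓ - ℓ)) ≤
        ((univ.filter fun ψ : Fin ℓ → Fin n => ∀ e ∈ F', e.image ψ ∈ H).card : ℝ)
          * (n:ℝ) ^ (k*ℓ - ℓ) := by
      have hsplit : (n:ℝ) ^ ℓ * (n:ℝ) ^ (k*ℓ - ℓ) = (n:ℝ) ^ (k*ℓ) := by
        rw [← pow_add]
        congr 1
        omega
      rw [hsplit]
      calc ζ₂ * (n:ℝ)^(k*ℓ)
          ≤ (((univ.filter (SatC (ℓ := ℓ) F H (fun _ => ℓ))).card : ℕ) : ℝ) := hfinal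
        _ ≤ (((univ.filter fun ψ : Fin ℓ → Fin n => ∀ e ∈ F', e.image ψ ∈ H).card
              * n ^ (k*ℓ - ℓ) : ℕ) : ℝ) := by exact_mod_cast htop
        _ = ((univ.filter fun ψ : Fin ℓ → Fin n => ∀ e ∈ F', e.image ψ ∈ H).card : ℝ)
              * (n:ℝ) ^ (k*ℓ - ℓ) := by push_cast; ring
    have hpos2 : (0:ℝ) < (n:ℝ) ^ (k*ℓ - ℓ) := by positivity
    refine le_of_mul_le_mul_right ?_ hpos2
    calc ζ₂ * (n:ℝ)^ℓ * (n:ℝ)^(k*ℓ-ℓ) = ζ₂ * ((n:ℝ)^ℓ * (n:ℝ)^(k*ℓ-ℓ)) := by ring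
      _ ≤ _ := hchain
  have hnoninj : ((univ.filter fun ψ : Fin ℓ → Fin n => ¬ Function.Injective ψ).card : ℝ)
      ≤ (ℓ:ℝ) * ℓ * (n:ℝ)^(ℓ-1) := by exact_mod_cast noninj_card ℓ n
  have hcopysplitR : ((univ.filter fun ψ : Fin ℓ → Fin n =>
        ∀ e ∈ F', e.image ψ ∈ H).card : ℝ)
      ≤ (copyCount F' H : ℝ)
        + ((univ.filter fun ψ : Fin ℓ → Fin n => ¬ Function.Injective ψ).card : ℝ) := by
    exact_mod_cast hom_le_copy_add_noninj F' H
  have hngeq : 2 * (ℓ:ℝ) * ℓ / ζ₂ ≤ (n:ℝ) := by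
    calc 2*(ℓ:ℝ)*ℓ/ζ₂ ≤ (⌈2*(ℓ:ℝ)*ℓ/ζ₂⌉₊ : ℝ) := Nat.le_ceil _
      _ ≤ (n:ℝ) := by exact_mod_cast le_trans (Nat.le_succ _) hn
  have hquad : (ℓ:ℝ)*ℓ*(n:ℝ)^(ℓ-1) ≤ ζ₂/2 * (n:ℝ)^ℓ := by
    have hℓpow : (n:ℝ)^ℓ = (n:ℝ)^(ℓ-1) * n := by
      rw [← pow_succ]
      congr 1
      omega
    rw [hℓpow]
    have hkey : (ℓ:ℝ)*ℓ ≤ ζ₂/2 * n := by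
      rw [div_le_iff₀ hζ₂] at hngeq
      linarith
    calc (ℓ:ℝ)*ℓ*(n:ℝ)^(ℓ-1) ≤ (ζ₂/2 * n) * (n:ℝ)^(ℓ-1) :=
        mul_le_mul_of_nonneg_right hkey (by positivity)
      _ = ζ₂/2 * ((n:ℝ)^(ℓ-1) * n) := by ring
  linarith [homF'bound, hcopysplitR, hnoninj, hquad]
end

section
/- For all ξ, ε ∈ (0,1] there exist η, ρ > 0 such that the following holds for all sufficiently large m. Suppose V₁, V₂, V₃ are pairwise disjoint sets of size m, G = (V₁ ⊔ V₂, P) is an (η,ξ)-regular bipartite graph, and H is a 3-partite 3-uniform hypergraph on V₁ ⊔ V₂ ⊔ V₃ that is (ρ, 1/4+ε, ev)-dense over (V₃, P) (viewing P as a set of ordered pairs in V₁×V₂). Then |∂H[V₁,V₃]| + |∂H[V₂,V₃]| ≥ (1+ε)·m². -/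
open Finset

variable {n : ℕ}

open Classical in
lemma eXP_eq_sum (E : Finset (Finset (Fin n))) (X : Finset (Fin n))
    (P : Finset (Fin n × Fin n)) :
    eXP E X P
      = ∑ x ∈ X, (P.filter (fun p => ({x, p.1, p.2} : Finset (Fin n)) ∈ E)).card := by
  classical
  simp only [eXP, Finset.card_filter, Finset.sum_product]

open Classical in
lemma shadowPairs_card_eq_sum (E : Finset (Finset (Fin n))) (A B : Finset (Fin n)) :
    (shadowPairs E A B).card
      = ∑ z ∈ B, (A.filter (fun a => ∃ e ∈ E, a ∈ e ∧ z ∈ e)).card := by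
  classical
  simp only [shadowPairs, Finset.card_filter, Finset.sum_product]
  exact Finset.sum_comm

/- STATEMENT 9: shadow bound over a regular bipartite pair. -/
set_option maxHeartbeats 2000000 in
theorem statement_9 :
    ∀ ξ ε : ℝ, 0 < ξ → ξ ≤ 1 → 0 < ε → ε ≤ 1 →
      ∃ η ρ : ℝ, 0 < η ∧ 0 < ρ ∧ ∃ m₀ : ℕ, ∀ m : ℕ, m₀ ≤ m →
        ∀ (N : ℕ) (V₁ V₂ V₃ : Finset (Fin N)),
          Disjoint V₁ V₂ → Disjoint V₁ V₃ → Disjoint V₂ V₃ →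
          V₁.card = m → V₂.card = m → V₃.card = m →
          ∀ P : Finset (Fin N × Fin N), P ⊆ V₁ ×ˢ V₂ →
            RegBip P V₁ V₂ η ξ →
            ∀ E : Finset (Finset (Fin N)),
              (∀ e ∈ E, ∃ a ∈ V₁, ∃ b ∈ V₂, ∃ c ∈ V₃, e = {a, b, c}) →
              EvDenseOver E ρ (1 / 4 + ε) V₃ P →
              (1 + ε) * (m : ℝ) ^ 2 ≤
                ((shadowPairs E V₁ V₃).card : ℝ) + ((shadowPairs E V₂ V₃).card : ℝ) := by
  intro ξ ε hξ hξ1 hε hε1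
  refine ⟨ξ * ε / 60, ε ^ 2 / 1000, by positivity, by positivity, 0, ?_⟩
  intro m _ N V₁ V₂ V₃ h12 h13 h23 hV1 hV2 hV3 P hPsub hreg E hE hdense
  classical
  rcases Nat.eq_zero_or_pos m with hm0 | hm0
  · subst hm0
    have h1 : (0:ℝ) ≤ ((shadowPairs E V₁ V₃).card : ℝ) := by positivity
    have h2 : (0:ℝ) ≤ ((shadowPairs E V₂ V₃).card : ℝ) := by positivity
    simp only [Nat.cast_zero]
    nlinarith
  have hM : (0:ℝ) < (m:ℝ) := by exact_mod_cast hm0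
  set M : ℝ := (m:ℝ) with hMdef
  set A : Fin N → Finset (Fin N) :=
    fun z => V₁.filter (fun a => ∃ e ∈ E, a ∈ e ∧ z ∈ e) with hA
  set B : Fin N → Finset (Fin N) :=
    fun z => V₂.filter (fun a => ∃ e ∈ E, a ∈ e ∧ z ∈ e) with hB
  have hPmem : ∀ p ∈ P, p.1 ∈ V₁ ∧ p.2 ∈ V₂ := fun p hp => Finset.mem_product.mp (hPsub hp)
  -- size of P
  have hPbound : |((P.card : ℝ)) - ξ * M * M| ≤ ξ * ε / 60 * M * M := by
    have h := hreg V₁ Finset.Subset.rfl V₂ Finset.Subset.rfl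
    have hPfull : P.filter (fun p => p.1 ∈ V₁ ∧ p.2 ∈ V₂) = P :=
      Finset.filter_true_of_mem hPmem
    rw [hPfull, hV1, hV2] at h
    exact h
  have hPlow : (ξ - ξ * ε / 60) * (M * M) ≤ (P.card : ℝ) := by
    have := (abs_le.mp hPbound).1
    nlinarith
  have hPhigh : (P.card : ℝ) ≤ (ξ + ξ * ε / 60) * (M * M) := by
    have := (abs_le.mp hPbound).2
    nlinarith
  -- per-vertex bound
  have hper : ∀ z : Fin N,
      ((P.filter (fun p => ({z, p.1, p.2} : Finset (Fin N)) ∈ E)).card : ℝ)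
        ≤ ξ * ((A z).card) * ((B z).card) + ξ * ε / 60 * M * M := by
    intro z
    have hsub : P.filter (fun p => ({z, p.1, p.2} : Finset (Fin N)) ∈ E)
        ⊆ P.filter (fun p => p.1 ∈ A z ∧ p.2 ∈ B z) := by
      intro p hp
      rw [Finset.mem_filter] at hp ⊢
      refine ⟨hp.1, ?_, ?_⟩
      · simp only [hA, Finset.mem_filter]
        exact ⟨(hPmem p hp.1).1, ⟨_, hp.2, by simp, by simp⟩⟩
      · simp only [hB, Finset.mem_filter]
        exact ⟨(hPmem p hp.1).2, ⟨_, hp.2, by simp, by simp⟩⟩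
    have hcard := Finset.card_le_card hsub
    have h := hreg (A z) (Finset.filter_subset _ _) (B z) (Finset.filter_subset _ _)
    rw [hV1, hV2] at h
    have h2 := (abs_le.mp h).2
    have hcard' : ((P.filter (fun p => ({z, p.1, p.2} : Finset (Fin N)) ∈ E)).card : ℝ)
        ≤ ((P.filter (fun p => p.1 ∈ A z ∧ p.2 ∈ B z)).card : ℝ) := by exact_mod_cast hcard
    linarith
  -- the bad set Z
  set Z : Finset (Fin N) :=
    V₃.filter (fun z => ((A z).card : ℝ) * ((B z).card) < (1/4 + 9*ε/10) * (M*M)) with hZ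
  have hZsub : Z ⊆ V₃ := Finset.filter_subset _ _
  have hZc0 : (0:ℝ) ≤ (Z.card : ℝ) := by positivity
  have hZcM : (Z.card : ℝ) ≤ M := by
    have := Finset.card_le_card hZsub
    rw [hV3] at this
    rw [hMdef]
    exact_mod_cast this
  -- upper bound on eXP over Z
  have hZup : (eXP E Z P : ℝ)
      ≤ (Z.card : ℝ) * (ξ * (1/4 + 9*ε/10) * (M*M) + ξ * ε / 60 * M * M) := by
    rw [eXP_eq_sum]
    push_cast
    have hstep : ∀ z ∈ Z,
        ((P.filter (fun p => ({z, p.1, p.2} : Finset (Fin N)) ∈ E)).card : ℝ)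
          ≤ ξ * (1/4 + 9*ε/10) * (M*M) + ξ * ε / 60 * M * M := by
      intro z hz
      have hzZ : ((A z).card : ℝ) * ((B z).card) < (1/4 + 9*ε/10) * (M*M) :=
        (Finset.mem_filter.mp hz).2
      have h1 := hper z
      have h2 := mul_le_mul_of_nonneg_left hzZ.le hξ.le
      nlinarith [h1, h2]
    calc ∑ z ∈ Z, ((P.filter (fun p => ({z, p.1, p.2} : Finset (Fin N)) ∈ E)).card : ℝ)
        ≤ ∑ _z ∈ Z, (ξ * (1/4 + 9*ε/10) * (M*M) + ξ * ε / 60 * M * M) :=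
          Finset.sum_le_sum hstep
      _ = (Z.card : ℝ) * (ξ * (1/4 + 9*ε/10) * (M*M) + ξ * ε / 60 * M * M) := by
          rw [Finset.sum_const, nsmul_eq_mul]
  -- lower bound from density
  have hdZ := hdense Z hZsub P Finset.Subset.rfl
  rw [hV3] at hdZ
  -- combine to bound |Z|
  have hZcard : (Z.card : ℝ) ≤ ε * M / 25 := by
    have c1 : (1/4 + ε) * (Z.card : ℝ) * ((ξ - ξ * ε / 60) * (M * M))
        ≤ (1/4 + ε) * (Z.card : ℝ) * (P.card : ℝ) := by
      apply mul_le_mul_of_nonneg_left hPlow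
      positivity
    have c2 : ε ^ 2 / 1000 * M * (P.card : ℝ)
        ≤ ε ^ 2 / 1000 * M * ((ξ + ξ * ε / 60) * (M * M)) := by
      apply mul_le_mul_of_nonneg_left hPhigh
      positivity
    have c3 : (1/4 + ε) * (Z.card : ℝ) * ((ξ - ξ * ε / 60) * (M * M))
        - ε ^ 2 / 1000 * M * ((ξ + ξ * ε / 60) * (M * M))
        ≤ (Z.card : ℝ) * (ξ * (1/4 + 9*ε/10) * (M*M) + ξ * ε / 60 * M * M) := by
      linarith
    have hint1 : (0:ℝ) ≤ ξ * (ε * (1 - ε)) * ((Z.card : ℝ) * (M*M)) :=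
      mul_nonneg (mul_nonneg hξ.le (mul_nonneg hε.le (by linarith))) (by positivity)
    have hint2 : (0:ℝ) ≤ ξ * (ε * ε * (1 - ε)) * (M*(M*M)) :=
      mul_nonneg (mul_nonneg hξ.le (mul_nonneg (mul_nonneg hε.le hε.le) (by linarith))) (by positivity)
    have c4 : ξ * (ε/16) * ((Z.card : ℝ) * (M*M)) ≤ ξ * (61 * ε^2 / 60000) * (M*(M*M)) := by
      linarith [c3, hint1, hint2]
    have c5 : (Z.card : ℝ) * (M*M) ≤ (976/60000) * ε * (M*(M*M)) := by
      have hpos : (0:ℝ) < ξ * (ε/16) := by positivity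
      have heq : ξ * (ε/16) * ((976/60000) * ε * (M*(M*M))) = ξ * (61 * ε^2 / 60000) * (M*(M*M)) := by
        ring
      have := (mul_le_mul_iff_right₀ hpos).mp (by linarith [c4, heq.ge] : ξ * (ε/16) * ((Z.card : ℝ) * (M*M))
              ≤ ξ * (ε/16) * ((976/60000) * ε * (M*(M*M))))
      exact this
    have hM2 : (0:ℝ) < M * M := by positivity
    have hemm : (0:ℝ) ≤ ε * (M * (M*M)) := by positivity
    have := (mul_le_mul_iff_left₀ hM2).mp
      (by linarith [c5, hemm] : (Z.card : ℝ) * (M*M) ≤ (ε * M / 25) * (M*M))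
    exact this
  -- good vertices have large shadow degree
  have hgood : ∀ z ∈ V₃ \ Z,
      (1 + 11*ε/10) * M ≤ ((A z).card : ℝ) + ((B z).card : ℝ) := by
    intro z hz
    rw [Finset.mem_sdiff] at hz
    have hab : (1/4 + 9*ε/10) * (M*M) ≤ ((A z).card : ℝ) * ((B z).card) := by
      by_contra hlt
      push_neg at hlt
      exact hz.2 (Finset.mem_filter.mpr ⟨hz.1, hlt⟩)
    have ha0 : (0:ℝ) ≤ ((A z).card : ℝ) := by positivity
    have hb0 : (0:ℝ) ≤ ((B z).card : ℝ) := by positivity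
    have haux : (0:ℝ) < (1 + 11*ε/10) * M + (((A z).card : ℝ) + ((B z).card : ℝ)) := by
      nlinarith [hM, hε, ha0, hb0]
    have hpos2 : (0:ℝ) ≤ ε * (1 - ε) * (M*M) :=
      mul_nonneg (mul_nonneg hε.le (by linarith)) (by positivity)
    have hepos : (0:ℝ) < ε * (M*M) := by positivity
    nlinarith [hab, sq_nonneg (((A z).card : ℝ) - ((B z).card : ℝ)),
      haux, hpos2, hepos]
  -- sum over good vertices
  have hsdiffcard : ((V₃ \ Z).card : ℝ) = M - (Z.card : ℝ) := by
    rw [Finset.card_sdiff_of_subset hZsub]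
    have hle : Z.card ≤ m := by rw [← hV3]; exact Finset.card_le_card hZsub
    rw [hV3]
    push_cast [hle]
    ring
  have hlowsum : ((V₃ \ Z).card : ℝ) * ((1 + 11*ε/10) * M)
      ≤ ∑ z ∈ V₃ \ Z, (((A z).card : ℝ) + ((B z).card : ℝ)) := by
    have := Finset.card_nsmul_le_sum (V₃ \ Z)
      (fun z => ((A z).card : ℝ) + ((B z).card : ℝ)) ((1 + 11*ε/10) * M) hgood
    rwa [nsmul_eq_mul] at this
  have hmono : ∑ z ∈ V₃ \ Z, (((A z).card : ℝ) + ((B z).card : ℝ))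
      ≤ ∑ z ∈ V₃, (((A z).card : ℝ) + ((B z).card : ℝ)) := by
    apply Finset.sum_le_sum_of_subset_of_nonneg Finset.sdiff_subset
    intro z _ _
    positivity
  -- identify the shadow cards
  have hsh1 : ((shadowPairs E V₁ V₃).card : ℝ) = ∑ z ∈ V₃, ((A z).card : ℝ) := by
    rw [shadowPairs_card_eq_sum]
    push_cast
    rfl
  have hsh2 : ((shadowPairs E V₂ V₃).card : ℝ) = ∑ z ∈ V₃, ((B z).card : ℝ) := by
    rw [shadowPairs_card_eq_sum]
    push_cast
    rfl
  have hsplit : ∑ z ∈ V₃, (((A z).card : ℝ) + ((B z).card : ℝ))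
      = ((shadowPairs E V₁ V₃).card : ℝ) + ((shadowPairs E V₂ V₃).card : ℝ) := by
    rw [hsh1, hsh2, Finset.sum_add_distrib]
  have hfinal : (1 + ε) * M ^ 2 ≤ (M - (Z.card : ℝ)) * ((1 + 11*ε/10) * M) := by
    nlinarith [mul_le_mul_of_nonneg_right hZcard hM.le,
      mul_le_mul_of_nonneg_right hZcard (mul_nonneg hε.le hM.le),
      mul_nonneg (mul_nonneg hε.le (sub_nonneg.mpr hε1)) (mul_nonneg hM.le hM.le),
      mul_pos hM hM, hZc0]
  rw [← hsplit]
  calc (1 + ε) * M ^ 2 ≤ (M - (Z.card : ℝ)) * ((1 + 11*ε/10) * M) := hfinal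
    _ = ((V₃ \ Z).card : ℝ) * ((1 + 11*ε/10) * M) := by rw [hsdiffcard]
    _ ≤ ∑ z ∈ V₃ \ Z, (((A z).card : ℝ) + ((B z).card : ℝ)) := hlowsum
    _ ≤ ∑ z ∈ V₃, (((A z).card : ℝ) + ((B z).card : ℝ)) := hmono
end

section
/- For every d, β > 0 there exist ρ, α > 0 and n₀ such that for every (ρ, d, ee)-dense 3-uniform hypergraph H on n ≥ n₀ vertices the following holds: for every ℓ ∈ {5,6,7} and for every pair of disjoint ordered β-connectable pairs (x,y), (w,z) ∈ V×V, the number of tight (x,y)-(z,w)-paths with ℓ inner vertices is at least α·n^ℓ. -/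
open Finset

variable {n : ℕ}

/-! ### Auxiliary machinery for statement 15 -/

section Aux15

open Classical

/-- Extension set: vertices `a` with `(a,b) ∈ A` and `{a,b,c} ∈ E`. -/
noncomputable def extSet (E : Finset (Finset (Fin n))) (A : Finset (Fin n × Fin n))
    (b c : Fin n) : Finset (Fin n) :=
  univ.filter (fun a => (a, b) ∈ A ∧ ({a, b, c} : Finset (Fin n)) ∈ E)

/-- Pairs whose extension set is large. -/
noncomputable def nextA (E : Finset (Finset (Fin n))) (A : Finset (Fin n × Fin n))
    (θ : ℝ) : Finset (Fin n × Fin n) :=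
  univ.filter (fun p => θ ≤ ((extSet E A p.1 p.2).card : ℝ))

lemma mem_nextA {E : Finset (Finset (Fin n))} {A : Finset (Fin n × Fin n)} {θ : ℝ}
    {p : Fin n × Fin n} : p ∈ nextA E A θ ↔ θ ≤ ((extSet E A p.1 p.2).card : ℝ) := by
  classical
  simp [nextA]

lemma extSet_card_le (E : Finset (Finset (Fin n))) (A : Finset (Fin n × Fin n))
    (b c : Fin n) : (extSet E A b c).card ≤ n := by
  classical
  calc (extSet E A b c).card ≤ (univ : Finset (Fin n)).card := card_le_card (filter_subset _ _)
  _ = n := by simp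

lemma ePQ_eq_sum (E : Finset (Finset (Fin n))) (P Q : Finset (Fin n × Fin n)) :
    ePQ E P Q = ∑ q ∈ Q, (extSet E P q.1 q.2).card := by
  classical
  unfold ePQ
  rw [Finset.card_filter, Finset.sum_product_right]
  refine Finset.sum_congr rfl (fun q _ => ?_)
  rw [← Finset.card_filter]
  refine Finset.card_bij (fun p _ => p.1) ?_ ?_ ?_
  · rintro p hp
    simp only [Finset.mem_filter] at hp
    obtain ⟨hpP, hmid, hedge⟩ := hp
    have hp2 : p = (p.1, q.1) := by
      rw [← hmid]
    simp only [extSet, Finset.mem_filter, Finset.mem_univ, true_and]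
    constructor
    · rw [← hp2]; exact hpP
    · rwa [← hmid]
  · rintro p hp p' hp' h
    simp only [Finset.mem_filter] at hp hp'
    have : p.2 = p'.2 := by rw [hp.2.1, hp'.2.1]
    exact Prod.ext h this
  · rintro a ha
    simp only [extSet, Finset.mem_filter, Finset.mem_univ, true_and] at ha
    exact ⟨(a, q.1), by simp [Finset.mem_filter, ha.1, ha.2], rfl⟩

lemma Kmid_eq_sum (P Q : Finset (Fin n × Fin n)) :
    (Kmid P Q).card = ∑ p ∈ P, (Q.filter (fun q => q.1 = p.2)).card := by
  classical
  unfold Kmid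
  rw [Finset.card_filter, Finset.sum_product]
  refine Finset.sum_congr rfl (fun p _ => ?_)
  rw [← Finset.card_filter]
  congr 1
  ext q
  simp [eq_comm]

lemma Kmid_right (P : Finset (Fin n × Fin n)) (M : Finset (Fin n)) :
    (Kmid P ((univ : Finset (Fin n)) ×ˢ M)).card = P.card * M.card := by
  classical
  rw [Kmid_eq_sum]
  have h : ∀ p ∈ P, (((univ : Finset (Fin n)) ×ˢ M).filter (fun q => q.1 = p.2)).card
      = M.card := by
    intro p _
    have : (((univ : Finset (Fin n)) ×ˢ M).filter (fun q => q.1 = p.2))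
        = {p.2} ×ˢ M := by
      ext q
      simp only [Finset.mem_filter, Finset.mem_product, Finset.mem_univ, true_and,
        Finset.mem_singleton]
      tauto
    rw [this, Finset.card_product, Finset.card_singleton, one_mul]
  rw [Finset.sum_congr rfl h, Finset.sum_const, smul_eq_mul]

lemma Kmid_eq_sum_mid (P Q : Finset (Fin n × Fin n)) :
    (Kmid P Q).card
      = ∑ m : Fin n, (P.filter (fun p => p.2 = m)).card * (Q.filter (fun q => q.1 = m)).card := by
  classical
  rw [Kmid_eq_sum]
  rw [← Finset.sum_fiberwise (s := P) (g := fun p => p.2)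
    (f := fun p => (Q.filter (fun q => q.1 = p.2)).card)]
  refine Finset.sum_congr rfl (fun m _ => ?_)
  have h : ∀ p ∈ P.filter (fun p => p.2 = m),
      (Q.filter (fun q => q.1 = p.2)).card = (Q.filter (fun q => q.1 = m)).card := by
    intro p hp
    simp only [Finset.mem_filter] at hp
    rw [hp.2]
  rw [Finset.sum_congr rfl h, Finset.sum_const, smul_eq_mul]

lemma threshold_count {α : Type*} [DecidableEq α] (s : Finset α) (f : α → ℕ)
    (M θ S : ℝ) (hθ : 0 ≤ θ) (hM : ∀ i ∈ s, (f i : ℝ) ≤ M)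
    (hS : S ≤ ∑ i ∈ s, (f i : ℝ)) :
    S ≤ ((s.filter (fun i => θ ≤ (f i : ℝ))).card : ℝ) * M + (s.card : ℝ) * θ := by
  classical
  have hsplit := Finset.sum_filter_add_sum_filter_not s (fun i => θ ≤ (f i : ℝ))
    (fun i => (f i : ℝ))
  have h1 : ∑ i ∈ s.filter (fun i => θ ≤ (f i : ℝ)), (f i : ℝ)
      ≤ ((s.filter (fun i => θ ≤ (f i : ℝ))).card : ℝ) * M := by
    have := Finset.sum_le_card_nsmul (s.filter (fun i => θ ≤ (f i : ℝ)))
      (fun i => (f i : ℝ)) M (fun i hi => hM i (Finset.mem_filter.1 hi).1)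
    simpa [nsmul_eq_mul] using this
  have h2 : ∑ i ∈ s.filter (fun i => ¬ θ ≤ (f i : ℝ)), (f i : ℝ)
      ≤ ((s.card : ℝ)) * θ := by
    have hle : ∑ i ∈ s.filter (fun i => ¬ θ ≤ (f i : ℝ)), (f i : ℝ)
        ≤ ((s.filter (fun i => ¬ θ ≤ (f i : ℝ))).card : ℝ) * θ := by
      have := Finset.sum_le_card_nsmul (s.filter (fun i => ¬ θ ≤ (f i : ℝ)))
        (fun i => (f i : ℝ)) θ
        (fun i hi => le_of_lt (lt_of_not_ge (Finset.mem_filter.1 hi).2))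
      simpa [nsmul_eq_mul] using this
    refine hle.trans ?_
    have : ((s.filter (fun i => ¬ θ ≤ (f i : ℝ))).card : ℝ) ≤ (s.card : ℝ) := by
      exact_mod_cast Finset.card_le_card (Finset.filter_subset _ _)
    nlinarith
  calc S ≤ ∑ i ∈ s, (f i : ℝ) := hS
  _ = _ + _ := hsplit.symm
  _ ≤ _ := add_le_add h1 h2


/-- Edge condition for a (partial) inner list `l`: all consecutive triples of
`l ++ [z, w]` are edges. -/
def EdgeCondL (E : Finset (Finset (Fin n))) (z w xd : Fin n) (l : List (Fin n)) : Prop :=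
  ∀ i : ℕ, i + 2 < l.length + 2 →
    ({(l ++ [z, w]).getD i xd, (l ++ [z, w]).getD (i + 1) xd,
      (l ++ [z, w]).getD (i + 2) xd} : Finset (Fin n)) ∈ E

lemma Agrow {E : Finset (Finset (Fin n))} {ρ d : ℝ} (hEe : EeDense E ρ d) (hd : 0 < d)
    {A : Finset (Fin n × Fin n)} {a : ℝ} (ha : 0 < a) (hA : a * (n : ℝ) ^ 2 ≤ A.card)
    (hρ : ρ ≤ d * a / 2) :
    (d * a / 4) * (n : ℝ) ^ 2 ≤ ((nextA E A ((d * a / 4) * n)).card : ℝ) := by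
  classical
  rcases Nat.eq_zero_or_pos n with h0 | hn
  · subst h0
    norm_num
  have hn' : (0 : ℝ) < n := by exact_mod_cast hn
  have hKe := hEe A univ
  have hK : ((Kmid A (univ : Finset (Fin n × Fin n))).card : ℝ) = (A.card : ℝ) * n := by
    have h1 : (univ : Finset (Fin n × Fin n)) = (univ : Finset (Fin n)) ×ˢ univ :=
      Finset.univ_product_univ.symm
    rw [h1, Kmid_right]
    push_cast
    simp
  have hsum : (ePQ E A univ : ℝ)
      = ∑ q ∈ (univ : Finset (Fin n × Fin n)), ((extSet E A q.1 q.2).card : ℝ) := by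
    rw [ePQ_eq_sum]
    push_cast
    rfl
  have hS : d * a * (n : ℝ) ^ 3 - ρ * (n : ℝ) ^ 3
      ≤ ∑ q ∈ (univ : Finset (Fin n × Fin n)), ((extSet E A q.1 q.2).card : ℝ) := by
    rw [← hsum]
    refine le_trans ?_ hKe
    rw [hK]
    nlinarith [mul_le_mul_of_nonneg_left hA (show (0:ℝ) ≤ d * n by positivity)]
  have hthr := threshold_count (univ : Finset (Fin n × Fin n))
    (fun q => (extSet E A q.1 q.2).card) n ((d * a / 4) * n)
    (d * a * (n : ℝ) ^ 3 - ρ * (n : ℝ) ^ 3) (by positivity)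
    (fun i _ => by exact_mod_cast extSet_card_le E A i.1 i.2) hS
  have hcardu : ((univ : Finset (Fin n × Fin n)).card : ℝ) = (n : ℝ) ^ 2 := by
    simp [Finset.card_univ]
    push_cast
    ring
  have hfilt : (univ : Finset (Fin n × Fin n)).filter
      (fun q => (d * a / 4) * n ≤ ((extSet E A q.1 q.2).card : ℝ))
      = nextA E A ((d * a / 4) * n) := by
    unfold nextA
    apply Finset.filter_congr_decidable
  rw [hcardu, hfilt] at hthr
  nlinarith [hthr, hn', mul_le_mul_of_nonneg_right hρ (show (0:ℝ) ≤ (n:ℝ)^3 by positivity),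
    mul_pos (mul_pos hd ha) hn']

lemma stepDown (E : Finset (Finset (Fin n))) (z w xd : Fin n)
    {Aprev : Finset (Fin n × Fin n)} {θ : ℝ}
    (L : Finset (List (Fin n))) (r : ℕ) (hr : 2 ≤ r)
    (hL : ∀ l ∈ L, l.length = r ∧ EdgeCondL E z w xd l ∧
      (l.getD 0 xd, l.getD 1 xd) ∈ nextA E Aprev θ) :
    ∃ L' : Finset (List (Fin n)),
      θ * (L.card : ℝ) ≤ (L'.card : ℝ) ∧
      ∀ l' ∈ L', l'.length = r + 1 ∧ EdgeCondL E z w xd l' ∧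
        (l'.getD 0 xd, l'.getD 1 xd) ∈ Aprev := by
  classical
  refine ⟨L.biUnion (fun l =>
    (extSet E Aprev (l.getD 0 xd) (l.getD 1 xd)).image (fun a => a :: l)), ?_, ?_⟩
  · have hdisj : ∀ l₁ ∈ L, ∀ l₂ ∈ L, l₁ ≠ l₂ →
        Disjoint ((extSet E Aprev (l₁.getD 0 xd) (l₁.getD 1 xd)).image (fun a => a :: l₁))
          ((extSet E Aprev (l₂.getD 0 xd) (l₂.getD 1 xd)).image (fun a => a :: l₂)) := by
      intro l₁ _ l₂ _ hne
      rw [Finset.disjoint_left]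
      rintro u hu1 hu2
      simp only [Finset.mem_image] at hu1 hu2
      obtain ⟨a1, _, h1⟩ := hu1
      obtain ⟨a2, _, h2⟩ := hu2
      apply hne
      have h3 := h1.trans h2.symm
      exact (List.cons_eq_cons.mp h3).2
    rw [Finset.card_biUnion hdisj]
    push_cast
    calc θ * (L.card : ℝ) = ∑ _l ∈ L, θ := by rw [Finset.sum_const]; ring
    _ ≤ ∑ l ∈ L, (((extSet E Aprev (l.getD 0 xd) (l.getD 1 xd)).image (fun a => a :: l)).card : ℝ) := by
        refine Finset.sum_le_sum (fun l hl => ?_)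
        have hmem := (hL l hl).2.2
        simp only [nextA, Finset.mem_filter, Finset.mem_univ, true_and] at hmem
        rw [Finset.card_image_of_injective _ (fun a b hab => (List.cons_eq_cons.mp hab).1)]
        exact hmem
    _ = _ := by push_cast; rfl
  · intro l' hl'
    simp only [Finset.mem_biUnion, Finset.mem_image] at hl'
    obtain ⟨l, hlL, a, haext, rfl⟩ := hl'
    obtain ⟨hlen, hEC, _⟩ := hL l hlL
    simp only [extSet, Finset.mem_filter, Finset.mem_univ, true_and] at haext
    have h0 : (a :: l).getD 0 xd = a := rfl
    have h1 : (a :: l).getD 1 xd = l.getD 0 xd := rfl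
    refine ⟨by simp [hlen], ?_, by rw [h0, h1]; exact haext.1⟩
    intro i hi
    match i with
    | 0 =>
      have e0 : ((a :: l) ++ [z, w]).getD 0 xd = a := rfl
      have e1 : ((a :: l) ++ [z, w]).getD 1 xd = l.getD 0 xd := by
        have : ((a :: l) ++ [z, w]).getD 1 xd = (l ++ [z, w]).getD 0 xd := rfl
        rw [this, List.getD_append _ _ _ _ (by omega)]
      have e2 : ((a :: l) ++ [z, w]).getD 2 xd = l.getD 1 xd := by
        have : ((a :: l) ++ [z, w]).getD 2 xd = (l ++ [z, w]).getD 1 xd := rfl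
        rw [this, List.getD_append _ _ _ _ (by omega)]
      rw [e0, e1, e2]
      exact haext.2
    | (i + 1) =>
      have ei : ∀ k : ℕ, ((a :: l) ++ [z, w]).getD (i + 1 + k) xd
          = (l ++ [z, w]).getD (i + k) xd := by
        intro k
        have : i + 1 + k = (i + k) + 1 := by omega
        rw [this]
        rfl
      have h2 := hEC i (by simp at hi ⊢; omega)
      have g0 := ei 0
      have g1 := ei 1
      have g2 := ei 2
      simp only [Nat.add_zero] at g0 h2
      rw [g0, g1, g2]
      convert h2 using 3 <;> omega

set_option maxHeartbeats 1000000 in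
lemma junction (E : Finset (Finset (Fin n))) (x z w : Fin n) (hn : 0 < n)
    {ρ d β : ℝ} (hEe : EeDense E ρ d) (hd : 0 < d) (hβ : 0 < β)
    (hconn : Connectable E β w z)
    {A : Finset (Fin n × Fin n)} {a : ℝ} (ha : 0 < a)
    (hA : a * (n : ℝ) ^ 2 ≤ A.card)
    (hρ1 : ρ ≤ d * a * β ^ 2 / 4) (hρ2 : ρ ≤ d ^ 2 * a * β ^ 2 / 16) :
    ∃ L : Finset (List (Fin n)),
      (d ^ 2 * a * β ^ 2 / 16) * (n : ℝ) ^ 3 ≤ (L.card : ℝ) ∧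
      ∀ l ∈ L, l.length = 3 ∧ EdgeCondL E z w x l ∧
        (l.getD 0 x, l.getD 1 x) ∈ nextA E A ((d * a / 4) * (n : ℝ)) := by
  classical
  have hn' : (0 : ℝ) < n := by exact_mod_cast hn
  set Z := connSet E β w z with hZdef
  have hZ : β * n ≤ (Z.card : ℝ) := hconn
  have hZmem : ∀ v ∈ Z, ({w, z, v} : Finset (Fin n)) ∈ E ∧ β * n ≤ (codeg E z v : ℝ) := by
    intro v hv
    rw [hZdef, connSet, Finset.mem_filter] at hv
    exact hv.2
  -- the end-pair set B
  set B : Finset (Fin n × Fin n) := (univ : Finset (Fin n × Fin n)).filter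
    (fun q => q.2 ∈ Z ∧ ({z, q.2, q.1} : Finset (Fin n)) ∈ E) with hBdef
  have hfibB_le : ∀ m : Fin n, (B.filter (fun q => q.1 = m)).card ≤ n := by
    intro m
    have : ((B.filter (fun q => q.1 = m)).card) ≤ (univ : Finset (Fin n)).card := by
      refine Finset.card_le_card_of_injOn (fun q => q.2) (fun q _ => Finset.mem_univ _) ?_
      intro q hq q' hq' h
      simp only [Finset.mem_coe, Finset.mem_filter] at hq hq'
      exact Prod.ext (hq.2.trans hq'.2.symm) h
    simpa using this
  have hBcard : β ^ 2 * (n : ℝ) ^ 2 ≤ (B.card : ℝ) := by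
    have hfib : B.card = ∑ v : Fin n, (B.filter (fun q => q.2 = v)).card :=
      Finset.card_eq_sum_card_fiberwise (fun q _ => Finset.mem_univ q.2)
    have hcodeg : ∀ v ∈ Z, (B.filter (fun q => q.2 = v)).card = codeg E z v := by
      intro v hv
      rw [codeg]
      refine Finset.card_bij (fun q _ => q.1) ?_ ?_ ?_
      · intro q hq
        simp only [Finset.mem_filter] at hq
        obtain ⟨hqB, hq2⟩ := hq
        rw [hBdef] at hqB
        simp only [Finset.mem_filter, Finset.mem_univ, true_and] at hqB
        simp only [Finset.mem_filter, Finset.mem_univ, true_and]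
        rw [← hq2]
        exact hqB.2
      · intro q hq q' hq' h
        simp only [Finset.mem_filter] at hq hq'
        exact Prod.ext h (hq.2.trans hq'.2.symm)
      · intro c hc
        simp only [Finset.mem_filter, Finset.mem_univ, true_and] at hc
        have hmemB : (c, v) ∈ B := by
          rw [hBdef]
          simp only [Finset.mem_filter, Finset.mem_univ, true_and]
          exact ⟨hv, hc⟩
        exact ⟨(c, v), Finset.mem_filter.mpr ⟨hmemB, rfl⟩, rfl⟩
    have h1 : ∑ v ∈ Z, ((codeg E z v : ℝ)) ≤ (B.card : ℝ) := by
      rw [hfib]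
      push_cast
      calc ∑ v ∈ Z, ((codeg E z v : ℝ))
          = ∑ v ∈ Z, ((B.filter (fun q => q.2 = v)).card : ℝ) := by
            refine Finset.sum_congr rfl (fun v hv => ?_)
            rw [hcodeg v hv]
      _ ≤ ∑ v : Fin n, ((B.filter (fun q => q.2 = v)).card : ℝ) := by
            refine Finset.sum_le_sum_of_subset_of_nonneg (Finset.subset_univ Z) ?_
            intro v _ _
            positivity
    have h2 : (Z.card : ℝ) * (β * n) ≤ ∑ v ∈ Z, ((codeg E z v : ℝ)) := by
      calc (Z.card : ℝ) * (β * n) = ∑ _v ∈ Z, (β * n) := by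
            rw [Finset.sum_const, nsmul_eq_mul]
      _ ≤ ∑ v ∈ Z, ((codeg E z v : ℝ)) := Finset.sum_le_sum (fun v hv => (hZmem v hv).2)
    nlinarith [h1, h2, mul_le_mul_of_nonneg_right hZ (show (0:ℝ) ≤ β * n by positivity)]
  -- big-sum per middle vertex
  set Sv : Fin n → ℕ := fun m => ∑ v : Fin n, (extSet E A v m).card with hSvdef
  set bad : Finset (Fin n) := univ.filter (fun m => ¬ ((d * a / 2) * (n : ℝ) ^ 2 ≤ (Sv m : ℝ)))
    with hbaddef
  have hbadkey : (d * a / 2) * (bad.card : ℝ) * (n : ℝ) ^ 2 ≤ ρ * (n : ℝ) ^ 3 := by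
    have hQ := hEe A ((univ : Finset (Fin n)) ×ˢ bad)
    have hKb : ((Kmid A ((univ : Finset (Fin n)) ×ˢ bad)).card : ℝ)
        = (A.card : ℝ) * bad.card := by
      rw [Kmid_right]; push_cast; ring
    have hsum : (ePQ E A ((univ : Finset (Fin n)) ×ˢ bad) : ℝ) = ∑ m ∈ bad, (Sv m : ℝ) := by
      rw [ePQ_eq_sum, Finset.sum_product_right]
      simp only [hSvdef]
      push_cast
      rfl
    have hub : ∑ m ∈ bad, (Sv m : ℝ) ≤ (bad.card : ℝ) * ((d * a / 2) * (n : ℝ) ^ 2) := by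
      calc ∑ m ∈ bad, (Sv m : ℝ) ≤ ∑ _m ∈ bad, ((d * a / 2) * (n : ℝ) ^ 2) := by
            refine Finset.sum_le_sum (fun m hm => ?_)
            rw [hbaddef] at hm
            simp only [Finset.mem_filter] at hm
            exact le_of_not_ge hm.2
      _ = _ := by rw [Finset.sum_const]; ring
    rw [hKb, hsum] at hQ
    nlinarith [mul_le_mul_of_nonneg_left hA
      (show (0:ℝ) ≤ d / 2 * bad.card by positivity)]
  -- the refined pair set
  set At : Finset (Fin n × Fin n) := nextA E A ((d * a / 4) * n) with hAtdef
  have hgoodfib : ∀ m : Fin n, (d * a / 2) * (n : ℝ) ^ 2 ≤ (Sv m : ℝ) →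
      (d * a / 4) * n ≤ ((At.filter (fun p => p.2 = m)).card : ℝ) := by
    intro m hm
    have hthr := threshold_count (univ : Finset (Fin n)) (fun v => (extSet E A v m).card)
      n ((d * a / 4) * n) ((d * a / 2) * (n : ℝ) ^ 2) (by positivity)
      (fun v _ => by exact_mod_cast extSet_card_le E A v m)
      (by rw [hSvdef] at hm; push_cast at hm ⊢; exact hm)
    have hinj : ((univ : Finset (Fin n)).filter
        (fun v => (d * a / 4) * n ≤ ((extSet E A v m).card : ℝ))).card
        ≤ (At.filter (fun p => p.2 = m)).card := by
      refine Finset.card_le_card_of_injOn (fun v => (v, m)) ?_ ?_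
      · intro v hv
        simp only [Finset.mem_coe, Finset.mem_filter, Finset.mem_univ, true_and] at hv
        refine Finset.mem_filter.mpr ⟨?_, rfl⟩
        rw [hAtdef]
        exact mem_nextA.mpr hv
      · intro v _ v' _ h
        exact (Prod.ext_iff.mp h).1
    have hcard : ((univ : Finset (Fin n)).card : ℝ) = n := by simp
    rw [hcard] at hthr
    have : (((univ : Finset (Fin n)).filter
        (fun v => (d * a / 4) * n ≤ ((extSet E A v m).card : ℝ))).card : ℝ)
        ≤ ((At.filter (fun p => p.2 = m)).card : ℝ) := by exact_mod_cast hinj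
    nlinarith [hthr, hn']
  -- lower bound for Kmid At B
  have hKAB : (d * a * β ^ 2 / 8) * (n : ℝ) ^ 3 ≤ ((Kmid At B).card : ℝ) := by
    have hmid := Kmid_eq_sum_mid At B
    have hmidR : ((Kmid At B).card : ℝ)
        = ∑ m : Fin n, ((At.filter (fun p => p.2 = m)).card : ℝ)
            * ((B.filter (fun q => q.1 = m)).card : ℝ) := by
      rw [hmid]; push_cast; rfl
    have hBfib : ∑ m : Fin n, ((B.filter (fun q => q.1 = m)).card : ℝ) = (B.card : ℝ) := by
      have := Finset.card_eq_sum_card_fiberwise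
        (f := fun q : Fin n × Fin n => q.1) (s := B) (t := univ) (fun q _ => Finset.mem_univ q.1)
      rw [this]; push_cast; rfl
    have hsplit := Finset.sum_filter_add_sum_filter_not (univ : Finset (Fin n))
      (fun m => (d * a / 2) * (n : ℝ) ^ 2 ≤ (Sv m : ℝ))
      (fun m => ((B.filter (fun q => q.1 = m)).card : ℝ))
    have hbadsum : ∑ m ∈ bad, ((B.filter (fun q => q.1 = m)).card : ℝ)
        ≤ (bad.card : ℝ) * n := by
      calc ∑ m ∈ bad, ((B.filter (fun q => q.1 = m)).card : ℝ)
          ≤ ∑ _m ∈ bad, (n : ℝ) := Finset.sum_le_sum (fun m _ => by exact_mod_cast hfibB_le m)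
      _ = _ := by rw [Finset.sum_const]; ring
    have hgoodsum : (B.card : ℝ) - (bad.card : ℝ) * n
        ≤ ∑ m ∈ univ.filter (fun m => (d * a / 2) * (n : ℝ) ^ 2 ≤ (Sv m : ℝ)),
            ((B.filter (fun q => q.1 = m)).card : ℝ) := by
      have h1 : ∑ m ∈ univ.filter (fun m => (d * a / 2) * (n : ℝ) ^ 2 ≤ (Sv m : ℝ)),
            ((B.filter (fun q => q.1 = m)).card : ℝ)
          + ∑ m ∈ bad, ((B.filter (fun q => q.1 = m)).card : ℝ) = (B.card : ℝ) := by
        rw [hbaddef, hsplit]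
        exact hBfib
      nlinarith [hbadsum]
    have hterm : ∀ m ∈ univ.filter (fun m => (d * a / 2) * (n : ℝ) ^ 2 ≤ (Sv m : ℝ)),
        ((d * a / 4) * n) * ((B.filter (fun q => q.1 = m)).card : ℝ)
        ≤ ((At.filter (fun p => p.2 = m)).card : ℝ)
            * ((B.filter (fun q => q.1 = m)).card : ℝ) := by
      intro m hm
      simp only [Finset.mem_filter, Finset.mem_univ, true_and] at hm
      exact mul_le_mul_of_nonneg_right (hgoodfib m hm) (by positivity)
    have hdrop : ∑ m ∈ univ.filter (fun m => (d * a / 2) * (n : ℝ) ^ 2 ≤ (Sv m : ℝ)),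
            ((At.filter (fun p => p.2 = m)).card : ℝ)
            * ((B.filter (fun q => q.1 = m)).card : ℝ)
        ≤ ∑ m : Fin n, ((At.filter (fun p => p.2 = m)).card : ℝ)
            * ((B.filter (fun q => q.1 = m)).card : ℝ) := by
      refine Finset.sum_le_sum_of_subset_of_nonneg (Finset.filter_subset _ _) ?_
      intro m _ _
      positivity
    have hchain : ((d * a / 4) * n) * ((B.card : ℝ) - (bad.card : ℝ) * n)
        ≤ ((Kmid At B).card : ℝ) := by
      rw [hmidR]
      calc ((d * a / 4) * n) * ((B.card : ℝ) - (bad.card : ℝ) * n)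
          ≤ ((d * a / 4) * n) * ∑ m ∈ univ.filter
              (fun m => (d * a / 2) * (n : ℝ) ^ 2 ≤ (Sv m : ℝ)),
              ((B.filter (fun q => q.1 = m)).card : ℝ) :=
            mul_le_mul_of_nonneg_left hgoodsum (by positivity)
      _ = ∑ m ∈ univ.filter (fun m => (d * a / 2) * (n : ℝ) ^ 2 ≤ (Sv m : ℝ)),
              ((d * a / 4) * n) * ((B.filter (fun q => q.1 = m)).card : ℝ) := by
            rw [Finset.mul_sum]
      _ ≤ ∑ m ∈ univ.filter (fun m => (d * a / 2) * (n : ℝ) ^ 2 ≤ (Sv m : ℝ)),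
              ((At.filter (fun p => p.2 = m)).card : ℝ)
              * ((B.filter (fun q => q.1 = m)).card : ℝ) := Finset.sum_le_sum hterm
      _ ≤ _ := hdrop
    have hbadn : (bad.card : ℝ) * n ≤ (β ^ 2 / 2) * (n : ℝ) ^ 2 := by
      nlinarith [hbadkey, mul_le_mul_of_nonneg_right hρ1 (show (0:ℝ) ≤ (n:ℝ)^3 by positivity),
        mul_pos (mul_pos hd ha) hn']
    have hX : (β ^ 2 / 2) * (n : ℝ) ^ 2 ≤ (B.card : ℝ) - (bad.card : ℝ) * n := by
      nlinarith [hBcard, hbadn]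
    have hY := mul_le_mul_of_nonneg_left hX (show (0:ℝ) ≤ (d * a / 4) * n by positivity)
    nlinarith [hchain, hY]
  -- apply ee-density at the junction
  have hJ : (d ^ 2 * a * β ^ 2 / 16) * (n : ℝ) ^ 3 ≤ (ePQ E At B : ℝ) := by
    have := hEe At B
    nlinarith [this, mul_le_mul_of_nonneg_left hKAB (le_of_lt hd),
      mul_le_mul_of_nonneg_right hρ2 (show (0:ℝ) ≤ (n:ℝ)^3 by positivity)]
  -- build the triple lists
  set J : Finset ((Fin n × Fin n) × Fin n × Fin n) := (At ×ˢ B).filter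
    (fun pq => pq.1.2 = pq.2.1 ∧ ({pq.1.1, pq.1.2, pq.2.2} : Finset (Fin n)) ∈ E) with hJdef
  have hJcard : J.card = ePQ E At B := by
    rw [hJdef, ePQ]
  refine ⟨J.image (fun pq => [pq.1.1, pq.1.2, pq.2.2]), ?_, ?_⟩
  · rw [Finset.card_image_of_injOn]
    · rw [hJcard]; exact hJ
    · intro pq hpq pq' hpq' h
      simp only [Finset.mem_coe, hJdef, Finset.mem_filter] at hpq hpq'
      simp only [List.cons.injEq, and_true] at h
      obtain ⟨h1, h2, h3⟩ := h
      have h4 : pq.2.1 = pq'.2.1 := by rw [← hpq.2.1, ← hpq'.2.1, h2]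
      exact Prod.ext (Prod.ext h1 h2) (Prod.ext h4 h3)
  · intro l hl
    simp only [Finset.mem_image] at hl
    obtain ⟨pq, hpq, rfl⟩ := hl
    rw [hJdef] at hpq
    simp only [Finset.mem_filter, Finset.mem_product] at hpq
    obtain ⟨⟨hAt, hB⟩, hmid, hedge⟩ := hpq
    have hBm : pq.2.2 ∈ Z ∧ ({z, pq.2.2, pq.2.1} : Finset (Fin n)) ∈ E := by
      rw [hBdef] at hB
      simpa using hB
    refine ⟨rfl, ?_, ?_⟩
    · intro i hi
      match i with
      | 0 => exact hedge
      | 1 =>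
        show ({pq.1.2, pq.2.2, z} : Finset (Fin n)) ∈ E
        have hre : ({pq.1.2, pq.2.2, z} : Finset (Fin n)) = {z, pq.2.2, pq.2.1} := by
          rw [hmid]
          ext b
          simp only [Finset.mem_insert, Finset.mem_singleton]
          tauto
        rw [hre]
        exact hBm.2
      | 2 =>
        show ({pq.2.2, z, w} : Finset (Fin n)) ∈ E
        have hre : ({pq.2.2, z, w} : Finset (Fin n)) = {w, z, pq.2.2} := by
          ext b
          simp only [Finset.mem_insert, Finset.mem_singleton]
          tauto
        rw [hre]
        exact (hZmem _ hBm.1).1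
      | (i + 3) =>
        simp only [List.length_cons, List.length_nil] at hi
        omega
    · show (pq.1.1, pq.1.2) ∈ At
      simpa using hAt

lemma card_coord_pair {m : ℕ} (i j : Fin m) (hij : i ≠ j) :
    ((univ : Finset (Fin m → Fin n)).filter (fun t => t i = t j)).card ≤ n ^ (m - 1) := by
  classical
  have hsub : Fintype.card {k : Fin m // k ≠ j} = m - 1 := by
    rw [Fintype.card_subtype_compl (fun k : Fin m => k = j), Fintype.card_subtype_eq,
      Fintype.card_fin]
  have hle := Finset.card_le_card_of_injOn
    (s := (univ : Finset (Fin m → Fin n)).filter (fun t => t i = t j))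
    (t := (univ : Finset ({k : Fin m // k ≠ j} → Fin n)))
    (f := fun (t : Fin m → Fin n) (k : {k : Fin m // k ≠ j}) => t k.1)
    (fun t _ => Finset.mem_univ _) ?_
  · calc ((univ : Finset (Fin m → Fin n)).filter (fun t => t i = t j)).card
        ≤ (univ : Finset ({k : Fin m // k ≠ j} → Fin n)).card := hle
    _ = n ^ (m - 1) := by
        rw [Finset.card_univ, Fintype.card_fun, Fintype.card_fin, hsub]
  · intro t ht t' ht' hF
    simp only [Finset.coe_filter, Set.mem_setOf_eq] at ht ht'
    funext k
    by_cases hk : k = j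
    · subst hk
      have hti := congrFun hF ⟨i, hij⟩
      simp only at hti
      rw [← ht.2, ← ht'.2]
      exact hti
    · exact congrFun hF ⟨k, hk⟩

lemma card_coord_const {m : ℕ} (i : Fin m) (c : Fin n) :
    ((univ : Finset (Fin m → Fin n)).filter (fun t => t i = c)).card ≤ n ^ (m - 1) := by
  classical
  have hsub : Fintype.card {k : Fin m // k ≠ i} = m - 1 := by
    rw [Fintype.card_subtype_compl (fun k : Fin m => k = i), Fintype.card_subtype_eq,
      Fintype.card_fin]
  have hle := Finset.card_le_card_of_injOn
    (s := (univ : Finset (Fin m → Fin n)).filter (fun t => t i = c))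
    (t := (univ : Finset ({k : Fin m // k ≠ i} → Fin n)))
    (f := fun (t : Fin m → Fin n) (k : {k : Fin m // k ≠ i}) => t k.1)
    (fun t _ => Finset.mem_univ _) ?_
  · calc ((univ : Finset (Fin m → Fin n)).filter (fun t => t i = c)).card
        ≤ (univ : Finset ({k : Fin m // k ≠ i} → Fin n)).card := hle
    _ = n ^ (m - 1) := by
        rw [Finset.card_univ, Fintype.card_fun, Fintype.card_fin, hsub]
  · intro t ht t' ht' hF
    simp only [Finset.coe_filter, Set.mem_setOf_eq] at ht ht'
    funext k
    by_cases hk : k = i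
    · subst hk
      rw [ht.2, ht'.2]
    · exact congrFun hF ⟨k, hk⟩

lemma badfun_card {m : ℕ} (x y z w : Fin n) :
    ((univ : Finset (Fin m → Fin n)).filter (fun t => (¬ Function.Injective t) ∨
      ∃ i, t i = x ∨ t i = y ∨ t i = z ∨ t i = w)).card
      ≤ (m * m + 4 * m) * n ^ (m - 1) := by
  classical
  set B1 : Finset (Fin m → Fin n) := (univ : Finset (Fin m × Fin m)).biUnion
    (fun p => univ.filter (fun t => p.1 ≠ p.2 ∧ t p.1 = t p.2)) with hB1
  set B2 : Finset (Fin m → Fin n) := (univ : Finset (Fin m)).biUnion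
    (fun i => univ.filter (fun t => t i = x) ∪ univ.filter (fun t => t i = y)
      ∪ univ.filter (fun t => t i = z) ∪ univ.filter (fun t => t i = w)) with hB2
  have hsub : ((univ : Finset (Fin m → Fin n)).filter (fun t => (¬ Function.Injective t) ∨
      ∃ i, t i = x ∨ t i = y ∨ t i = z ∨ t i = w)) ⊆ B1 ∪ B2 := by
    intro t ht
    simp only [Finset.mem_filter, Finset.mem_univ, true_and] at ht
    rcases ht with hni | ⟨i, hi⟩
    · rw [Function.not_injective_iff] at hni
      obtain ⟨a, b, hab, hne⟩ := hni
      refine Finset.mem_union_left _ ?_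
      rw [hB1]
      exact Finset.mem_biUnion.mpr ⟨(a, b), Finset.mem_univ _,
        Finset.mem_filter.mpr ⟨Finset.mem_univ _, hne, hab⟩⟩
    · refine Finset.mem_union_right _ ?_
      rw [hB2]
      refine Finset.mem_biUnion.mpr ⟨i, Finset.mem_univ _, ?_⟩
      simp only [Finset.mem_union, Finset.mem_filter, Finset.mem_univ, true_and]
      tauto
  have hB1card : B1.card ≤ m * m * n ^ (m - 1) := by
    calc B1.card ≤ ∑ p ∈ (univ : Finset (Fin m × Fin m)),
        (univ.filter (fun t : Fin m → Fin n => p.1 ≠ p.2 ∧ t p.1 = t p.2)).card :=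
      Finset.card_biUnion_le
    _ ≤ ∑ _p ∈ (univ : Finset (Fin m × Fin m)), n ^ (m - 1) := by
        refine Finset.sum_le_sum (fun p _ => ?_)
        by_cases hp : p.1 = p.2
        · have : (univ.filter (fun t : Fin m → Fin n => p.1 ≠ p.2 ∧ t p.1 = t p.2)) = ∅ := by
            refine Finset.filter_false_of_mem (fun t _ => ?_)
            simp [hp]
          rw [this]
          simp
        · refine le_trans (Finset.card_le_card
            (Finset.monotone_filter_right univ (fun t _ h => h.2)))
            (card_coord_pair p.1 p.2 hp)
    _ = m * m * n ^ (m - 1) := by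
        rw [Finset.sum_const, Finset.card_univ, Fintype.card_prod, Fintype.card_fin]
        simp [mul_assoc]
  have hB2card : B2.card ≤ 4 * m * n ^ (m - 1) := by
    calc B2.card ≤ ∑ i ∈ (univ : Finset (Fin m)),
        ((univ.filter (fun t : Fin m → Fin n => t i = x) ∪ univ.filter (fun t => t i = y)
          ∪ univ.filter (fun t => t i = z) ∪ univ.filter (fun t => t i = w)).card) :=
      Finset.card_biUnion_le
    _ ≤ ∑ _i ∈ (univ : Finset (Fin m)), 4 * n ^ (m - 1) := by
        refine Finset.sum_le_sum (fun i _ => ?_)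
        have h1 := card_coord_const (n := n) (m := m) i x
        have h2 := card_coord_const (n := n) (m := m) i y
        have h3 := card_coord_const (n := n) (m := m) i z
        have h4 := card_coord_const (n := n) (m := m) i w
        have u1 := Finset.card_union_le (univ.filter (fun t : Fin m → Fin n => t i = x))
          (univ.filter (fun t => t i = y))
        have u2 := Finset.card_union_le (univ.filter (fun t : Fin m → Fin n => t i = x)
          ∪ univ.filter (fun t => t i = y)) (univ.filter (fun t => t i = z))
        have u3 := Finset.card_union_le (univ.filter (fun t : Fin m → Fin n => t i = x)
          ∪ univ.filter (fun t => t i = y) ∪ univ.filter (fun t => t i = z))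
          (univ.filter (fun t => t i = w))
        calc (univ.filter (fun t : Fin m → Fin n => t i = x) ∪ univ.filter (fun t => t i = y)
              ∪ univ.filter (fun t => t i = z) ∪ univ.filter (fun t => t i = w)).card
            ≤ (univ.filter (fun t : Fin m → Fin n => t i = x) ∪ univ.filter (fun t => t i = y)
              ∪ univ.filter (fun t => t i = z)).card
              + (univ.filter (fun t : Fin m → Fin n => t i = w)).card := u3
        _ ≤ ((univ.filter (fun t : Fin m → Fin n => t i = x)
              ∪ univ.filter (fun t => t i = y)).card
              + (univ.filter (fun t : Fin m → Fin n => t i = z)).card)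
              + (univ.filter (fun t : Fin m → Fin n => t i = w)).card :=
            Nat.add_le_add_right u2 _
        _ ≤ (((univ.filter (fun t : Fin m → Fin n => t i = x)).card
              + (univ.filter (fun t : Fin m → Fin n => t i = y)).card)
              + (univ.filter (fun t : Fin m → Fin n => t i = z)).card)
              + (univ.filter (fun t : Fin m → Fin n => t i = w)).card :=
            Nat.add_le_add_right (Nat.add_le_add_right u1 _) _
        _ ≤ ((n ^ (m - 1) + n ^ (m - 1)) + n ^ (m - 1)) + n ^ (m - 1) :=
            Nat.add_le_add (Nat.add_le_add (Nat.add_le_add h1 h2) h3) h4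
        _ = 4 * n ^ (m - 1) := by ring
    _ = 4 * m * n ^ (m - 1) := by
        rw [Finset.sum_const, Finset.card_univ, Fintype.card_fin]
        ring
  calc ((univ : Finset (Fin m → Fin n)).filter _).card ≤ (B1 ∪ B2).card :=
      Finset.card_le_card hsub
  _ ≤ B1.card + B2.card := Finset.card_union_le _ _
  _ ≤ m * m * n ^ (m - 1) + 4 * m * n ^ (m - 1) := Nat.add_le_add hB1card hB2card
  _ = (m * m + 4 * m) * n ^ (m - 1) := by ring

lemma finish15 (E : Finset (Finset (Fin n))) (x y z w : Fin n) (ℓ : ℕ)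
    (hl2 : 2 ≤ ℓ) (hl7 : ℓ ≤ 7)
    (hxy : x ≠ y) (hzw : z ≠ w) (hxz : x ≠ z) (hxw : x ≠ w) (hyz : y ≠ z) (hyw : y ≠ w)
    (P0 : Finset (Fin n × Fin n))
    (hP0 : ∀ p ∈ P0, ({x, y, p.1} : Finset (Fin n)) ∈ E ∧
      ({y, p.1, p.2} : Finset (Fin n)) ∈ E)
    (Lf : Finset (List (Fin n)))
    (hLf : ∀ l ∈ Lf, l.length = ℓ ∧ EdgeCondL E z w x l ∧ (l.getD 0 x, l.getD 1 x) ∈ P0)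
    (C : ℝ) (hcard : C * (n : ℝ) ^ ℓ ≤ (Lf.card : ℝ))
    (h77 : 77 * (n : ℝ) ^ (ℓ - 1) ≤ (C / 2) * (n : ℝ) ^ ℓ) :
    (C / 2) * (n : ℝ) ^ ℓ ≤ (connCount E x y z w ℓ : ℝ) := by
  classical
  set ψ : List (Fin n) → (Fin ℓ → Fin n) := fun l i => l.getD i x with hψ
  have hψinj : ∀ l ∈ Lf, ∀ l' ∈ Lf, ψ l = ψ l' → l = l' := by
    intro l hl l' hl' h
    have h1 := (hLf l hl).1
    have h2 := (hLf l' hl').1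
    refine List.ext_getElem (by rw [h1, h2]) ?_
    intro i hi hi'
    have hiℓ : i < ℓ := by rw [← h1]; exact hi
    have hh := congrFun h ⟨i, hiℓ⟩
    rw [hψ] at hh
    simp only at hh
    rwa [List.getD_eq_getElem l x hi, List.getD_eq_getElem l' x hi'] at hh
  set GoodL : Finset (List (Fin n)) := Lf.filter
    (fun l => l.Nodup ∧ ∀ v ∈ l, v ≠ x ∧ v ≠ y ∧ v ≠ z ∧ v ≠ w) with hGoodL
  set badL : Finset (List (Fin n)) := Lf.filter
    (fun l => ¬ (l.Nodup ∧ ∀ v ∈ l, v ≠ x ∧ v ≠ y ∧ v ≠ z ∧ v ≠ w)) with hbadL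
  have hsumcard : GoodL.card + badL.card = Lf.card := by
    rw [hGoodL, hbadL]
    exact Finset.card_filter_add_card_filter_not _
  -- bound the bad part
  have hbadcard : badL.card ≤ 77 * n ^ (ℓ - 1) := by
    have himg : badL.card = (badL.image ψ).card := by
      rw [Finset.card_image_of_injOn]
      intro l hl l' hl' h
      simp only [Finset.mem_coe, hbadL, Finset.mem_filter] at hl hl'
      exact hψinj l hl.1 l' hl'.1 h
    have hsub : badL.image ψ ⊆ (univ : Finset (Fin ℓ → Fin n)).filter
        (fun t => (¬ Function.Injective t) ∨ ∃ i, t i = x ∨ t i = y ∨ t i = z ∨ t i = w) := by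
      intro t ht
      simp only [Finset.mem_image] at ht
      obtain ⟨l, hl, rfl⟩ := ht
      rw [hbadL] at hl
      simp only [Finset.mem_filter] at hl
      obtain ⟨hlLf, hbad⟩ := hl
      have h1 := (hLf l hlLf).1
      refine Finset.mem_filter.mpr ⟨Finset.mem_univ _, ?_⟩
      rw [not_and_or] at hbad
      rcases hbad with hnd | hav
      · left
        intro hinj
        apply hnd
        rw [List.nodup_iff_injective_getElem]
        intro k k' hkk
        have hk : (k : ℕ) < ℓ := by rw [← h1]; exact k.2
        have hk' : (k' : ℕ) < ℓ := by rw [← h1]; exact k'.2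
        have e1 : ψ l ⟨k, hk⟩ = l[(k : ℕ)] := by
          rw [hψ]
          exact List.getD_eq_getElem l x k.2
        have e2 : ψ l ⟨k', hk'⟩ = l[(k' : ℕ)] := by
          rw [hψ]
          exact List.getD_eq_getElem l x k'.2
        have : ψ l ⟨k, hk⟩ = ψ l ⟨k', hk'⟩ := by rw [e1, e2]; exact hkk
        have := hinj this
        simp only [Fin.mk.injEq] at this
        exact Fin.ext this
      · right
        push_neg at hav
        obtain ⟨v, hvl, hv⟩ := hav
        rw [List.mem_iff_getElem] at hvl
        obtain ⟨i, hi, rfl⟩ := hvl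
        have hiℓ : i < ℓ := by rw [← h1]; exact hi
        refine ⟨⟨i, hiℓ⟩, ?_⟩
        have e1 : ψ l ⟨i, hiℓ⟩ = l[i] := by
          rw [hψ]
          exact List.getD_eq_getElem l x hi
        rw [e1]
        by_cases c1 : l[i] = x
        · tauto
        by_cases c2 : l[i] = y
        · tauto
        by_cases c3 : l[i] = z
        · tauto
        have c4 := hv c1 c2 c3
        tauto
    calc badL.card = (badL.image ψ).card := himg
    _ ≤ _ := Finset.card_le_card hsub
    _ ≤ (ℓ * ℓ + 4 * ℓ) * n ^ (ℓ - 1) := badfun_card x y z w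
    _ ≤ 77 * n ^ (ℓ - 1) := Nat.mul_le_mul_right _ (by nlinarith)
  -- every good list gives a tight path
  have hGoodPath : ∀ l ∈ GoodL,
      TightPath E ([x, y] ++ List.ofFn (ψ l) ++ [z, w]) := by
    intro l hl
    rw [hGoodL] at hl
    simp only [Finset.mem_filter] at hl
    obtain ⟨hlLf, hnd, hav⟩ := hl
    obtain ⟨h1, hEC, hp0⟩ := hLf l hlLf
    have hofn : List.ofFn (ψ l) = l := by
      refine List.ext_getElem (by simp [h1]) ?_
      intro i hi hi'
      simp only [List.getElem_ofFn]
      exact List.getD_eq_getElem l x hi'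
    have hLform : [x, y] ++ l ++ [z, w] = x :: y :: (l ++ [z, w]) := by simp
    rw [hofn, hLform]
    constructor
    · -- Nodup
      have h3 : (l ++ [z, w]).Nodup := by
        rw [List.nodup_append]
        refine ⟨hnd, by simp [hzw], ?_⟩
        intro a ha b hb hab
        subst hab
        simp only [List.mem_cons, List.mem_singleton, List.not_mem_nil, or_false] at hb
        rcases hb with rfl | rfl
        · exact (hav a ha).2.2.1 rfl
        · exact (hav a ha).2.2.2 rfl
      have hy2 : y ∉ l ++ [z, w] := by
        rw [List.mem_append]
        rintro (hyl | hyzw)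
        · exact (hav y hyl).2.1 rfl
        · simp only [List.mem_cons, List.mem_singleton, List.not_mem_nil, or_false] at hyzw
          rcases hyzw with rfl | rfl
          · exact hyz rfl
          · exact hyw rfl
      have hx2 : x ∉ y :: (l ++ [z, w]) := by
        rw [List.mem_cons, List.mem_append]
        rintro (rfl | hxl | hxzw)
        · exact hxy rfl
        · exact (hav x hxl).1 rfl
        · simp only [List.mem_cons, List.mem_singleton, List.not_mem_nil, or_false] at hxzw
          rcases hxzw with rfl | rfl
          · exact hxz rfl
          · exact hxw rfl
      exact List.nodup_cons.mpr ⟨hx2, List.nodup_cons.mpr ⟨hy2, h3⟩⟩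
    · -- edges
      intro i hi
      have hlen : (x :: y :: (l ++ [z, w])).length = ℓ + 4 := by simp [h1]
      have hlenM : (l ++ [z, w]).length = ℓ + 2 := by simp [h1]
      have hd0 : (l ++ [z, w]).getD 0 x = l.getD 0 x :=
        List.getD_append _ _ _ _ (by omega)
      have hd1 : (l ++ [z, w]).getD 1 x = l.getD 1 x :=
        List.getD_append _ _ _ _ (by omega)
      have pf0 : 0 < (l ++ [z, w]).length := by rw [hlenM]; omega
      have pf1 : 1 < (l ++ [z, w]).length := by rw [hlenM]; omega
      match i with
      | 0 =>
        show ({x, y, (l ++ [z, w])[0]'pf0} : Finset (Fin n)) ∈ E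
        rw [← List.getD_eq_getElem (l ++ [z, w]) x pf0, hd0]
        exact (hP0 _ hp0).1
      | 1 =>
        show ({y, (l ++ [z, w])[0]'pf0, (l ++ [z, w])[1]'pf1} : Finset (Fin n)) ∈ E
        rw [← List.getD_eq_getElem (l ++ [z, w]) x pf0,
          ← List.getD_eq_getElem (l ++ [z, w]) x pf1, hd0, hd1]
        exact (hP0 _ hp0).2
      | (k + 2) =>
        have hkb : k + 2 < ℓ + 2 := by rw [hlen] at hi; omega
        have pfk : k < (l ++ [z, w]).length := by rw [hlenM]; omega
        have pfk1 : k + 1 < (l ++ [z, w]).length := by rw [hlenM]; omega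
        have pfk2 : k + 2 < (l ++ [z, w]).length := by rw [hlenM]; omega
        show ({(l ++ [z, w])[k]'pfk, (l ++ [z, w])[k + 1]'pfk1,
          (l ++ [z, w])[k + 2]'pfk2} : Finset (Fin n)) ∈ E
        rw [← List.getD_eq_getElem (l ++ [z, w]) x pfk,
          ← List.getD_eq_getElem (l ++ [z, w]) x pfk1,
          ← List.getD_eq_getElem (l ++ [z, w]) x pfk2]
        exact hEC k (by rw [h1]; omega)
  -- conclude
  have hconn : GoodL.card ≤ connCount E x y z w ℓ := by
    rw [connCount]
    refine Finset.card_le_card_of_injOn ψ ?_ ?_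
    · intro l hl
      refine Finset.mem_filter.mpr ⟨Finset.mem_univ _, hGoodPath l hl⟩
    · intro l hl l' hl' h
      simp only [Finset.mem_coe, hGoodL, Finset.mem_filter] at hl hl'
      exact hψinj l hl.1 l' hl'.1 h
  have hbadR : (badL.card : ℝ) ≤ 77 * (n : ℝ) ^ (ℓ - 1) := by exact_mod_cast hbadcard
  have hsumR : (GoodL.card : ℝ) + (badL.card : ℝ) = (Lf.card : ℝ) := by
    exact_mod_cast hsumcard
  have hconnR : (GoodL.card : ℝ) ≤ (connCount E x y z w ℓ : ℝ) := by exact_mod_cast hconn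
  nlinarith [hcard, h77, hbadR, hsumR, hconnR]

lemma Connectable_mono {E : Finset (Finset (Fin n))} {β β' : ℝ} {x y : Fin n}
    (hβ' : 0 ≤ β') (hle : β' ≤ β) (h : Connectable E β x y) : Connectable E β' x y := by
  classical
  have hmul : β' * n ≤ β * n := mul_le_mul_of_nonneg_right hle (Nat.cast_nonneg n)
  have hsub : connSet E β x y ⊆ connSet E β' x y := by
    intro v hv
    rw [connSet, Finset.mem_filter] at hv ⊢
    exact ⟨hv.1, hv.2.1, le_trans hmul hv.2.2⟩
  have hc : (connSet E β x y).card ≤ (connSet E β' x y).card := Finset.card_le_card hsub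
  unfold Connectable at h ⊢
  calc β' * n ≤ β * n := hmul
  _ ≤ ((connSet E β x y).card : ℝ) := h
  _ ≤ _ := by exact_mod_cast hc

lemma Connectable_ne {E : Finset (Finset (Fin n))} (h3 : ThreeUniform E) {β : ℝ} (hβ : 0 < β)
    (hn : 0 < n) {x y : Fin n} (hc : Connectable E β x y) : x ≠ y := by
  classical
  intro h
  subst h
  have hempty : connSet E β x x = ∅ := by
    rw [connSet]
    refine Finset.filter_false_of_mem (fun v _ hpred => ?_)
    obtain ⟨hedge, -⟩ := hpred
    have hcard := h3 _ hedge
    have he : ({x, x, v} : Finset (Fin n)) = {x, v} := by rw [Finset.insert_idem]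
    rw [he] at hcard
    have h2 : ({x, v} : Finset (Fin n)).card ≤ 2 := by
      refine le_trans (Finset.card_insert_le _ _) ?_
      simp
    omega
  unfold Connectable at hc
  rw [hempty] at hc
  simp only [Finset.card_empty, Nat.cast_zero] at hc
  have hpos : (0:ℝ) < β * n := by positivity
  linarith

lemma startPairs_card (E : Finset (Finset (Fin n))) (x y : Fin n) {β : ℝ} (hβ : 0 < β)
    (hconn : Connectable E β x y) :
    β ^ 2 * (n : ℝ) ^ 2 ≤ (((univ : Finset (Fin n × Fin n)).filter
      (fun p => p.1 ∈ connSet E β x y ∧ ({y, p.1, p.2} : Finset (Fin n)) ∈ E)).card : ℝ) := by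
  classical
  set Z := connSet E β x y with hZdef
  have hZ : β * n ≤ (Z.card : ℝ) := hconn
  have hZcod : ∀ v ∈ Z, β * n ≤ (codeg E y v : ℝ) := by
    intro v hv
    rw [hZdef, connSet, Finset.mem_filter] at hv
    exact hv.2.2
  set P : Finset (Fin n × Fin n) := (univ : Finset (Fin n × Fin n)).filter
    (fun p => p.1 ∈ Z ∧ ({y, p.1, p.2} : Finset (Fin n)) ∈ E) with hPdef
  have hfib : P.card = ∑ v : Fin n, (P.filter (fun q => q.1 = v)).card :=
    Finset.card_eq_sum_card_fiberwise (fun q _ => Finset.mem_univ q.1)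
  have hcodeg : ∀ v ∈ Z, (P.filter (fun q => q.1 = v)).card = codeg E y v := by
    intro v hv
    rw [codeg]
    refine Finset.card_bij (fun q _ => q.2) ?_ ?_ ?_
    · intro q hq
      simp only [Finset.mem_filter] at hq
      obtain ⟨hqP, hq1⟩ := hq
      rw [hPdef] at hqP
      simp only [Finset.mem_filter, Finset.mem_univ, true_and] at hqP
      simp only [Finset.mem_filter, Finset.mem_univ, true_and]
      rw [← hq1]
      exact hqP.2
    · intro q hq q' hq' hqq
      simp only [Finset.mem_filter] at hq hq'
      exact Prod.ext (hq.2.trans hq'.2.symm) hqq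
    · intro c hc
      simp only [Finset.mem_filter, Finset.mem_univ, true_and] at hc
      have hmemP : (v, c) ∈ P := by
        rw [hPdef]
        simp only [Finset.mem_filter, Finset.mem_univ, true_and]
        exact ⟨hv, hc⟩
      exact ⟨(v, c), Finset.mem_filter.mpr ⟨hmemP, rfl⟩, rfl⟩
  have h1 : ∑ v ∈ Z, ((codeg E y v : ℝ)) ≤ (P.card : ℝ) := by
    rw [hfib]
    push_cast
    calc ∑ v ∈ Z, ((codeg E y v : ℝ))
        = ∑ v ∈ Z, ((P.filter (fun q => q.1 = v)).card : ℝ) := by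
          refine Finset.sum_congr rfl (fun v hv => ?_)
          rw [hcodeg v hv]
    _ ≤ ∑ v : Fin n, ((P.filter (fun q => q.1 = v)).card : ℝ) := by
          refine Finset.sum_le_sum_of_subset_of_nonneg (Finset.subset_univ Z) ?_
          intro v _ _
          positivity
  have h2 : (Z.card : ℝ) * (β * n) ≤ ∑ v ∈ Z, ((codeg E y v : ℝ)) := by
    calc (Z.card : ℝ) * (β * n) = ∑ _v ∈ Z, (β * n) := by
          rw [Finset.sum_const, nsmul_eq_mul]
    _ ≤ ∑ v ∈ Z, ((codeg E y v : ℝ)) := Finset.sum_le_sum (fun v hv => hZcod v hv)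
  nlinarith [h1, h2, mul_le_mul_of_nonneg_right hZ (show (0:ℝ) ≤ β * n by positivity)]

lemma startPairs_good (E : Finset (Finset (Fin n))) (x y : Fin n) {β : ℝ} :
    ∀ p ∈ ((univ : Finset (Fin n × Fin n)).filter
      (fun p => p.1 ∈ connSet E β x y ∧ ({y, p.1, p.2} : Finset (Fin n)) ∈ E)),
      ({x, y, p.1} : Finset (Fin n)) ∈ E ∧ ({y, p.1, p.2} : Finset (Fin n)) ∈ E := by
  classical
  intro p hp
  simp only [Finset.mem_filter, Finset.mem_univ, true_and] at hp
  obtain ⟨hpZ, hpE⟩ := hp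
  rw [connSet, Finset.mem_filter] at hpZ
  exact ⟨hpZ.2.1, hpE⟩

end Aux15
/- STATEMENT 15: Connecting Lemma for ee-density conditions. -/
set_option maxHeartbeats 2000000 in
theorem statement_15 :
    ∀ d β : ℝ, 0 < d → 0 < β →
      ∃ ρ α : ℝ, 0 < ρ ∧ 0 < α ∧ ∃ n₀ : ℕ, ∀ n : ℕ, n₀ ≤ n →
        ∀ E : Finset (Finset (Fin n)), ThreeUniform E → EeDense E ρ d →
          ∀ ℓ : ℕ, (ℓ = 5 ∨ ℓ = 6 ∨ ℓ = 7) →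
            ∀ x y w z : Fin n,
              x ≠ w → x ≠ z → y ≠ w → y ≠ z →
              Connectable E β x y → Connectable E β w z →
              α * (n : ℝ) ^ ℓ ≤ (connCount E x y z w ℓ : ℝ) := by
  intro d0 β0 hd0 hβ0
  classical
  set d : ℝ := min d0 1 with hddef
  set β : ℝ := min β0 1 with hβdef
  have hd : 0 < d := lt_min hd0 one_pos
  have hβ : 0 < β := lt_min hβ0 one_pos
  have hd1 : d ≤ 1 := min_le_right _ _
  have hβ1 : β ≤ 1 := min_le_right _ _
  have hdpow : ∀ k : ℕ, d ^ k ≤ 1 := fun k => pow_le_one₀ hd.le hd1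
  have hβpow : ∀ k : ℕ, β ^ k ≤ 1 := fun k => pow_le_one₀ hβ.le hβ1
  set ρ : ℝ := d ^ 5 * β ^ 4 / 2048 with hρdef
  set Cmin : ℝ := d ^ 15 * β ^ 12 / 1073741824 with hCdef
  have hρpos : 0 < ρ := by rw [hρdef]; positivity
  have hCpos : 0 < Cmin := by rw [hCdef]; positivity
  refine ⟨ρ, Cmin / 2, hρpos, half_pos hCpos, ⟨⌈(154 : ℝ) / Cmin⌉₊ + 1, ?_⟩⟩
  intro n hn E h3 hEe0 ℓ hℓ x y w z hxw hxz hyw hyz hcxy0 hcwz0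
  have hn1 : 0 < n := by omega
  have hn' : (0:ℝ) < n := by exact_mod_cast hn1
  have h154 : (154 : ℝ) ≤ Cmin * n := by
    have hle : (154:ℝ)/Cmin ≤ (⌈(154 : ℝ) / Cmin⌉₊ : ℝ) := Nat.le_ceil _
    have hle2 : ((⌈(154 : ℝ) / Cmin⌉₊ : ℕ) : ℝ) ≤ (n : ℝ) := by
      exact_mod_cast le_trans (Nat.le_succ _) hn
    have hfin := le_trans hle hle2
    rw [div_le_iff₀ hCpos] at hfin
    linarith
  have hEe : EeDense E ρ d := by
    intro P Q
    refine le_trans ?_ (hEe0 P Q)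
    have hK : (0:ℝ) ≤ ((Kmid P Q).card : ℝ) := Nat.cast_nonneg _
    have hdd : d ≤ d0 := min_le_left _ _
    nlinarith
  have hcxy : Connectable E β x y := Connectable_mono hβ.le (min_le_left _ _) hcxy0
  have hcwz : Connectable E β w z := Connectable_mono hβ.le (min_le_left _ _) hcwz0
  have hxy : x ≠ y := Connectable_ne h3 hβ hn1 hcxy
  have hwz : w ≠ z := Connectable_ne h3 hβ hn1 hcwz
  -- smallness conditions for ρ
  have hr1 : ρ ≤ d * β ^ 2 / 2 := by
    rw [hρdef]
    nlinarith [mul_le_mul_of_nonneg_left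
      (mul_le_one₀ (hdpow 4) (by positivity) (hβpow 2))
      (show (0:ℝ) ≤ d * β ^ 2 by positivity)]
  have hr2 : ρ ≤ d * (d * β ^ 2 / 4) / 2 := by
    rw [hρdef]
    nlinarith [mul_le_mul_of_nonneg_left
      (mul_le_one₀ (hdpow 3) (by positivity) (hβpow 2))
      (show (0:ℝ) ≤ d ^ 2 * β ^ 2 by positivity)]
  have hr3 : ρ ≤ d * (d * (d * β ^ 2 / 4) / 4) / 2 := by
    rw [hρdef]
    nlinarith [mul_le_mul_of_nonneg_left
      (mul_le_one₀ (hdpow 2) (by positivity) (hβpow 2))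
      (show (0:ℝ) ≤ d ^ 3 * β ^ 2 by positivity)]
  have hj1a : ρ ≤ d * (d * β ^ 2 / 4) * β ^ 2 / 4 := by
    rw [hρdef]
    nlinarith [mul_le_mul_of_nonneg_left (hdpow 3)
      (show (0:ℝ) ≤ d ^ 2 * β ^ 4 by positivity)]
  have hj1b : ρ ≤ d ^ 2 * (d * β ^ 2 / 4) * β ^ 2 / 16 := by
    rw [hρdef]
    nlinarith [mul_le_mul_of_nonneg_left (hdpow 2)
      (show (0:ℝ) ≤ d ^ 3 * β ^ 4 by positivity)]
  have hj2a : ρ ≤ d * (d * (d * β ^ 2 / 4) / 4) * β ^ 2 / 4 := by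
    rw [hρdef]
    nlinarith [mul_le_mul_of_nonneg_left (hdpow 2)
      (show (0:ℝ) ≤ d ^ 3 * β ^ 4 by positivity)]
  have hj2b : ρ ≤ d ^ 2 * (d * (d * β ^ 2 / 4) / 4) * β ^ 2 / 16 := by
    rw [hρdef]
    nlinarith [mul_le_mul_of_nonneg_left hd1
      (show (0:ℝ) ≤ d ^ 4 * β ^ 4 by positivity)]
  have hj3a : ρ ≤ d * (d * (d * (d * β ^ 2 / 4) / 4) / 4) * β ^ 2 / 4 := by
    rw [hρdef]
    nlinarith [mul_le_mul_of_nonneg_left hd1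
      (show (0:ℝ) ≤ d ^ 4 * β ^ 4 by positivity)]
  have hj3b : ρ ≤ d ^ 2 * (d * (d * (d * β ^ 2 / 4) / 4) / 4) * β ^ 2 / 16 := by
    rw [hρdef]
    nlinarith [pow_pos hd 5, pow_pos hβ 4, mul_pos (pow_pos hd 5) (pow_pos hβ 4)]
  -- the chain of pair sets
  have hP0card := startPairs_card E x y hβ hcxy
  have hA1 := Agrow hEe hd (show (0:ℝ) < β ^ 2 by positivity) hP0card hr1
  have hA2 := Agrow hEe hd (show (0:ℝ) < d * β ^ 2 / 4 by positivity) hA1 hr2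
  have hA3 := Agrow hEe hd (show (0:ℝ) < d * (d * β ^ 2 / 4) / 4 by positivity) hA2 hr3
  rcases hℓ with rfl | rfl | rfl
  · -- ℓ = 5
    obtain ⟨L0, hL0c, hL0p⟩ := junction E x z w hn1 hEe hd hβ hcwz
      (show (0:ℝ) < d * β ^ 2 / 4 by positivity) hA1 hj1a hj1b
    obtain ⟨L1, hL1c, hL1p⟩ := stepDown E z w x L0 3 (by omega) hL0p
    obtain ⟨L2, hL2c, hL2p⟩ := stepDown E z w x L1 4 (by omega) hL1p
    have c1 := le_trans (mul_le_mul_of_nonneg_left hL0c (by positivity)) hL1c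
    have c2 := le_trans (mul_le_mul_of_nonneg_left c1 (by positivity)) hL2c
    have hmono : Cmin ≤ d ^ 6 * β ^ 8 / 4096 := by
      rw [hCdef]
      nlinarith [mul_le_mul_of_nonneg_left
        (mul_le_one₀ (hdpow 9) (by positivity) (hβpow 4))
        (show (0:ℝ) ≤ d ^ 6 * β ^ 8 by positivity)]
    have hcount : Cmin * (n : ℝ) ^ (5:ℕ) ≤ (L2.card : ℝ) := by
      linarith only [c2, mul_le_mul_of_nonneg_right hmono
        (show (0:ℝ) ≤ (n:ℝ) ^ (5:ℕ) by positivity)]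
    have h77 : 77 * (n:ℝ) ^ (5 - 1) ≤ Cmin / 2 * (n:ℝ) ^ (5:ℕ) := by
      norm_num
      linarith only [mul_le_mul_of_nonneg_right h154
        (show (0:ℝ) ≤ (n:ℝ) ^ (4:ℕ) by positivity)]
    exact finish15 E x y z w 5 (by omega) (by omega) hxy hwz.symm hxz hxw hyz hyw
      ((univ : Finset (Fin n × Fin n)).filter
        (fun p => p.1 ∈ connSet E β x y ∧ ({y, p.1, p.2} : Finset (Fin n)) ∈ E))
      (startPairs_good (β := β) E x y) L2
      (fun l hl => ⟨by have := (hL2p l hl).1; omega, (hL2p l hl).2.1, (hL2p l hl).2.2⟩)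
      Cmin hcount h77
  · -- ℓ = 6
    obtain ⟨L0, hL0c, hL0p⟩ := junction E x z w hn1 hEe hd hβ hcwz
      (show (0:ℝ) < d * (d * β ^ 2 / 4) / 4 by positivity) hA2 hj2a hj2b
    obtain ⟨L1, hL1c, hL1p⟩ := stepDown E z w x L0 3 (by omega) hL0p
    obtain ⟨L2, hL2c, hL2p⟩ := stepDown E z w x L1 4 (by omega) hL1p
    obtain ⟨L3, hL3c, hL3p⟩ := stepDown E z w x L2 5 (by omega) hL2p
    have c1 := le_trans (mul_le_mul_of_nonneg_left hL0c (by positivity)) hL1c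
    have c2 := le_trans (mul_le_mul_of_nonneg_left c1 (by positivity)) hL2c
    have c3 := le_trans (mul_le_mul_of_nonneg_left c2 (by positivity)) hL3c
    have hmono : Cmin ≤ d ^ 10 * β ^ 10 / 1048576 := by
      rw [hCdef]
      nlinarith [mul_le_mul_of_nonneg_left
        (mul_le_one₀ (hdpow 5) (by positivity) (hβpow 2))
        (show (0:ℝ) ≤ d ^ 10 * β ^ 10 by positivity)]
    have hcount : Cmin * (n : ℝ) ^ (6:ℕ) ≤ (L3.card : ℝ) := by
      linarith only [c3, mul_le_mul_of_nonneg_right hmono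
        (show (0:ℝ) ≤ (n:ℝ) ^ (6:ℕ) by positivity)]
    have h77 : 77 * (n:ℝ) ^ (6 - 1) ≤ Cmin / 2 * (n:ℝ) ^ (6:ℕ) := by
      norm_num
      linarith only [mul_le_mul_of_nonneg_right h154
        (show (0:ℝ) ≤ (n:ℝ) ^ (5:ℕ) by positivity)]
    exact finish15 E x y z w 6 (by omega) (by omega) hxy hwz.symm hxz hxw hyz hyw
      ((univ : Finset (Fin n × Fin n)).filter
        (fun p => p.1 ∈ connSet E β x y ∧ ({y, p.1, p.2} : Finset (Fin n)) ∈ E))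
      (startPairs_good (β := β) E x y) L3
      (fun l hl => ⟨by have := (hL3p l hl).1; omega, (hL3p l hl).2.1, (hL3p l hl).2.2⟩)
      Cmin hcount h77
  · -- ℓ = 7
    obtain ⟨L0, hL0c, hL0p⟩ := junction E x z w hn1 hEe hd hβ hcwz
      (show (0:ℝ) < d * (d * (d * β ^ 2 / 4) / 4) / 4 by positivity) hA3 hj3a hj3b
    obtain ⟨L1, hL1c, hL1p⟩ := stepDown E z w x L0 3 (by omega) hL0p
    obtain ⟨L2, hL2c, hL2p⟩ := stepDown E z w x L1 4 (by omega) hL1p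
    obtain ⟨L3, hL3c, hL3p⟩ := stepDown E z w x L2 5 (by omega) hL2p
    obtain ⟨L4, hL4c, hL4p⟩ := stepDown E z w x L3 6 (by omega) hL3p
    have c1 := le_trans (mul_le_mul_of_nonneg_left hL0c (by positivity)) hL1c
    have c2 := le_trans (mul_le_mul_of_nonneg_left c1 (by positivity)) hL2c
    have c3 := le_trans (mul_le_mul_of_nonneg_left c2 (by positivity)) hL3c
    have c4 := le_trans (mul_le_mul_of_nonneg_left c3 (by positivity)) hL4c
    have hmono : Cmin ≤ d ^ 15 * β ^ 12 / 1073741824 := le_of_eq hCdef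
    have hcount : Cmin * (n : ℝ) ^ (7:ℕ) ≤ (L4.card : ℝ) := by
      linarith only [c4, mul_le_mul_of_nonneg_right hmono
        (show (0:ℝ) ≤ (n:ℝ) ^ (7:ℕ) by positivity)]
    have h77 : 77 * (n:ℝ) ^ (7 - 1) ≤ Cmin / 2 * (n:ℝ) ^ (7:ℕ) := by
      norm_num
      linarith only [mul_le_mul_of_nonneg_right h154
        (show (0:ℝ) ≤ (n:ℝ) ^ (6:ℕ) by positivity)]
    exact finish15 E x y z w 7 (by omega) (by omega) hxy hwz.symm hxz hxw hyz hyw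
      ((univ : Finset (Fin n × Fin n)).filter
        (fun p => p.1 ∈ connSet E β x y ∧ ({y, p.1, p.2} : Finset (Fin n)) ∈ E))
      (startPairs_good (β := β) E x y) L4
      (fun l hl => ⟨by have := (hL4p l hl).1; omega, (hL4p l hl).2.1, (hL4p l hl).2.2⟩)
      Cmin hcount h77
end
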